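/- arXiv:2401.06347 — 10 statements merged into one kernel-verified Lean document; each statement's English description precedes it below -/
import Mathlib

section
/- Assume ν has no atoms and let s ∈ (0,1) with p ≤ s. Then μ({y ∈ ℝ : F(y) ≤ s}) = s; that is, if Y has law μ, then Pr(F(Y) ≤ s) = s whenever the zero-probability p is at most s. -/
open MeasureTheory Set

/-- Let `μ = p·δ₀ + (1-p)·ν` be a zero-inflated mixture with `p ∈ (0,1)`,
`ν` a Borel probability measure on `ℝ` with `ν((-∞,0]) = 0` and no atoms, and let
`F(y) = μ((-∞,y])` be its CDF.  If `s ∈ (0,1)` and `p ≤ s`, then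
`μ({y : F(y) ≤ s}) = s`, i.e. `Pr(F(Y) ≤ s) = s` when `Y` has law `μ`. -/
theorem stmt1 (p : ℝ) (hp : p ∈ Set.Ioo (0 : ℝ) 1)
    (ν : Measure ℝ) [IsProbabilityMeasure ν] [NullSingletonClass ν] (hν : ν (Set.Iic 0) = 0)
    (μ : Measure ℝ)
    (hμ : μ = ENNReal.ofReal p • Measure.dirac 0 + ENNReal.ofReal (1 - p) • ν)
    (F : ℝ → ℝ) (hF : ∀ y, F y = (μ (Set.Iic y)).toReal)
    (s : ℝ) (hs : s ∈ Set.Ioo (0 : ℝ) 1) (hps : p ≤ s) :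
    μ {y : ℝ | F y ≤ s} = ENNReal.ofReal s := by
  obtain ⟨hp0, hp1⟩ := hp
  obtain ⟨hs0, hs1⟩ := hs
  haveI : IsProbabilityMeasure μ := by
    constructor
    rw [hμ]
    simp only [Measure.add_apply, Measure.smul_apply, smul_eq_mul, measure_univ, mul_one]
    rw [← ENNReal.ofReal_add hp0.le (by linarith)]
    norm_num
  -- F agrees with the cdf of μ
  have hFc : ∀ y, F y = ProbabilityTheory.cdf μ y := fun y => by
    rw [hF y, ProbabilityTheory.cdf_eq_real, measureReal_def]
  have hmono : Monotone F := by
    intro a b hab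
    rw [hFc a, hFc b]
    exact ProbabilityTheory.monotone_cdf μ hab
  have hofReal : ∀ y, ENNReal.ofReal (F y) = μ (Set.Iic y) := fun y => by
    rw [hFc y]; exact ProbabilityTheory.ofReal_cdf μ y
  -- F 0 = p
  have hF0 : F 0 = p := by
    rw [hF 0, hμ]
    simp only [Measure.add_apply, Measure.smul_apply, smul_eq_mul, hν, mul_zero, add_zero]
    rw [Measure.dirac_apply_of_mem (by simp : (0:ℝ) ∈ Set.Iic 0), mul_one,
      ENNReal.toReal_ofReal hp0.le]
  -- μ has no atoms outside 0
  have hatom : ∀ t : ℝ, t ≠ 0 → μ {t} = 0 := by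
    intro t ht
    rw [hμ]
    simp only [Measure.add_apply, Measure.smul_apply, smul_eq_mul]
    rw [show ν {t} = 0 from measure_singleton t,
      Measure.dirac_apply' _ (measurableSet_singleton t)]
    simp [Set.indicator_apply, Ne.symm ht]
  set S : Set ℝ := {y : ℝ | F y ≤ s} with hS
  have h0S : (0:ℝ) ∈ S := by simpa [hS, hF0] using hps
  -- S is bounded above
  have hbdd : BddAbove S := by
    have htop : Filter.Tendsto F Filter.atTop (nhds 1) := by
      have := ProbabilityTheory.tendsto_cdf_atTop μ
      refine this.congr fun y => (hFc y).symm
    have : ∀ᶠ y in Filter.atTop, s < F y :=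
      htop.eventually (eventually_gt_nhds hs1)
    obtain ⟨y₀, hy₀⟩ := this.exists
    refine ⟨y₀, fun y hy => ?_⟩
    by_contra hlt
    push_neg at hlt
    exact absurd (hmono hlt.le) (not_le.mpr (lt_of_le_of_lt hy hy₀))
  set t : ℝ := sSup S with htdef
  have ht0 : 0 ≤ t := le_csSup hbdd h0S
  -- every y < t satisfies μ (Iic y) ≤ ofReal s
  have hIic_le : ∀ y < t, μ (Set.Iic y) ≤ ENNReal.ofReal s := by
    intro y hy
    obtain ⟨z, hzS, hyz⟩ := exists_lt_of_lt_csSup ⟨0, h0S⟩ hy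
    calc μ (Set.Iic y) ≤ μ (Set.Iic z) := measure_mono (Set.Iic_subset_Iic.mpr hyz.le)
      _ = ENNReal.ofReal (F z) := (hofReal z).symm
      _ ≤ ENNReal.ofReal s := ENNReal.ofReal_le_ofReal hzS
  -- F t ≤ s
  have hFt_le : F t ≤ s := by
    rcases eq_or_lt_of_le ht0 with h | h
    · rw [← h, hF0]; exact hps
    · -- t > 0 : μ {t} = 0 and μ (Iio t) ≤ ofReal s
      have hIio : μ (Set.Iio t) ≤ ENNReal.ofReal s := by
        have hUnion : Set.Iio t = ⋃ n : ℕ, Set.Iic (t - 1/(n+1)) := by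
          ext x
          simp only [Set.mem_Iio, Set.mem_iUnion, Set.mem_Iic]
          constructor
          · intro hx
            obtain ⟨n, hn⟩ := exists_nat_one_div_lt (show (0:ℝ) < t - x by linarith)
            exact ⟨n, by linarith⟩
          · rintro ⟨n, hn⟩
            have : (0:ℝ) < 1/(n+1) := by positivity
            linarith
        rw [hUnion, Directed.measure_iUnion ?_]
        · refine iSup_le fun n => hIic_le _ ?_
          have : (0:ℝ) < 1/(n+1) := by positivity
          linarith
        · refine Monotone.directed_le fun m n hmn => ?_
          refine Set.Iic_subset_Iic.mpr ?_
          have : 1/((n:ℝ)+1) ≤ 1/((m:ℝ)+1) := by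
            apply one_div_le_one_div_of_le (by positivity)
            have : (m:ℝ) ≤ n := Nat.cast_le.mpr hmn
            linarith
          linarith
      have hsingle : μ {t} = 0 := hatom t (ne_of_gt h)
      have hIic : μ (Set.Iic t) ≤ ENNReal.ofReal s := by
        have : Set.Iic t ⊆ Set.Iio t ∪ {t} := by
          intro x hx
          rcases lt_or_eq_of_le (Set.mem_Iic.mp hx) with h' | h'
          · exact Or.inl h'
          · exact Or.inr (by simp [h'])
        calc μ (Set.Iic t) ≤ μ (Set.Iio t ∪ {t}) := measure_mono this
          _ ≤ μ (Set.Iio t) + μ {t} := measure_union_le _ _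
          _ ≤ ENNReal.ofReal s + 0 := by rw [hsingle]; exact add_le_add_left hIio 0
          _ = ENNReal.ofReal s := add_zero _
      have := (hofReal t) ▸ hIic
      rwa [ENNReal.ofReal_le_ofReal_iff hs0.le] at this
  have htS : t ∈ S := hFt_le
  have hSeq : S = Set.Iic t := by
    ext y
    constructor
    · intro hy
      exact le_csSup hbdd hy
    · intro hy
      exact le_trans (hmono hy) hFt_le
  -- F t = s by right continuity
  have hFt : F t = s := by
    by_contra hne
    have hlt : F t < s := lt_of_le_of_ne hFt_le hne
    have hrc : ContinuousWithinAt (ProbabilityTheory.cdf μ) (Set.Ici t) t :=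
      (ProbabilityTheory.cdf μ).right_continuous t
    have hev : ∀ᶠ y in nhdsWithin t (Set.Ici t), ProbabilityTheory.cdf μ y < s := by
      refine hrc.eventually_lt_const ?_
      rw [← hFc t]; exact hlt
    have hev' : ∀ᶠ y in nhdsWithin t (Set.Ioi t), ProbabilityTheory.cdf μ y < s :=
      hev.filter_mono (nhdsWithin_mono t Set.Ioi_subset_Ici_self)
    obtain ⟨y, hy⟩ := (hev'.and self_mem_nhdsWithin).exists
    have hyS : y ∈ S := by rw [hS]; simp only [Set.mem_setOf_eq, hFc y]; exact hy.1.le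
    exact absurd (le_csSup hbdd hyS) (not_le.mpr hy.2)
  rw [hSeq, ← hofReal t, hFt]
end

section
/- Assume each ν_x has no atoms. Then for every s ∈ (0,1), Pr(F(Y|X) ≤ s) = s · μ_X({x : p₀(x) ≤ s}); in other words, the CDF of the probability integral transform F(Y|X) at s equals s·Pr(p₀(X) ≤ s). -/
open MeasureTheory ProbabilityTheory Set
open scoped ENNReal ProbabilityTheory

lemma key (ν : Measure ℝ) [IsProbabilityMeasure ν] [NullSingletonClass ν] (hν0 : ν (Iic 0) = 0)
    (τ : ℝ≥0∞) (hτ : τ < 1) : ν {y | ν (Iic y) ≤ τ} = τ := by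
  set S : Set ℝ := {y | ν (Iic y) ≤ τ} with hS
  have hmono : ∀ {y z : ℝ}, y ≤ z → z ∈ S → y ∈ S := fun {y z} hyz hz =>
    le_trans (measure_mono (Iic_subset_Iic.2 hyz)) hz
  have h0 : (0 : ℝ) ∈ S := by simp [hS, hν0]
  have hbdd : BddAbove S := by
    have h1 : ν univ = 1 := measure_univ
    have htend := tendsto_measure_Iic_atTop ν
    rw [h1] at htend
    obtain ⟨b, hb⟩ := (htend.eventually_const_lt hτ).exists
    refine ⟨b, fun y hy => ?_⟩
    by_contra hby
    push_neg at hby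
    exact absurd (le_trans (measure_mono (Iic_subset_Iic.2 hby.le)) hy) (not_le.2 hb)
  set m := sSup S with hm
  have hnear : ∀ ε : ℝ, 0 < ε → m - ε ∈ S := by
    intro ε hε
    obtain ⟨y, hyS, hy⟩ := exists_lt_of_lt_csSup ⟨0, h0⟩ (show m - ε < sSup S by rw [← hm]; linarith)
    exact hmono hy.le hyS
  have hdir : ∀ i j : ℕ, i ≤ j → (1:ℝ)/(j+1) ≤ 1/(i+1) := by
    intro i j h
    have hij : (i:ℝ) ≤ j := Nat.cast_le.2 h
    apply one_div_le_one_div_of_le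
    · positivity
    · linarith
  have hIio : ν (Iio m) ≤ τ := by
    have hcover : Iio m ⊆ ⋃ n : ℕ, Iic (m - 1 / (n + 1)) := by
      intro z hz
      obtain ⟨n, hn⟩ := exists_nat_one_div_lt (sub_pos.2 (show z < m from hz))
      exact mem_iUnion.2 ⟨n, by simp only [mem_Iic]; linarith⟩
    calc ν (Iio m) ≤ ν (⋃ n : ℕ, Iic (m - 1 / (n + 1))) := measure_mono hcover
      _ = ⨆ n : ℕ, ν (Iic (m - 1 / (n + 1))) := by
          apply Directed.measure_iUnion
          intro i j
          rcases le_total i j with h | h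
          · exact ⟨j, Iic_subset_Iic.2 (by linarith [hdir i j h]), subset_rfl⟩
          · exact ⟨i, subset_rfl, Iic_subset_Iic.2 (by linarith [hdir j i h])⟩
      _ ≤ τ := iSup_le fun n => hnear _ (by positivity)
  have hmS : m ∈ S := by
    have h2 : ν (Iic m) ≤ ν (Iio m) + ν {m} := by
      refine (measure_union_le _ _).trans_eq' ?_
      rw [← Iio_union_Icc_eq_Iic (le_refl m), Icc_self]
    simp only [measure_singleton, add_zero] at h2
    exact h2.trans hIio
  have hSeq : S = Iic m := by
    ext y
    constructor
    · exact fun hy => le_csSup hbdd hy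
    · exact fun hy => hmono hy hmS
  have hlow : τ ≤ ν (Iic m) := by
    have hInter : Iic m = ⋂ n : ℕ, Iic (m + 1 / (n + 1)) := by
      ext z
      simp only [mem_Iic, mem_iInter]
      constructor
      · intro h n
        have hp : (0:ℝ) < 1 / (n+1) := by positivity
        linarith
      · intro h
        by_contra hzm
        push_neg at hzm
        obtain ⟨n, hn⟩ := exists_nat_one_div_lt (sub_pos.2 hzm)
        exact absurd (h n) (by push_neg; linarith)
    have hd2 : Directed (· ⊇ ·) (fun n : ℕ => Iic (m + 1 / (n + 1))) := by
      intro i j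
      rcases le_total i j with h | h
      · exact ⟨j, Iic_subset_Iic.2 (by linarith [hdir i j h]), Iic_subset_Iic.2 (by linarith)⟩
      · exact ⟨i, Iic_subset_Iic.2 (by linarith), Iic_subset_Iic.2 (by linarith [hdir j i h])⟩
    have heq := hd2.measure_iInter (μ := ν)
      (fun n => measurableSet_Iic.nullMeasurableSet)
      ⟨0, measure_ne_top ν _⟩
    rw [hInter, heq]
    refine le_iInf fun n => ?_
    have hnot : m + 1 / (n + 1) ∉ S := by
      intro h
      have := le_csSup hbdd h
      rw [← hm] at this
      have hp : (0:ℝ) < 1 / (n+1) := by positivity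
      linarith
    exact (not_le.1 hnot).le
  rw [hSeq]
  exact le_antisymm hmS hlow

/-- Semicontinuous regression setup.  `X : Ω → ℝ^d` has law `μ_X`,
`p₀ : ℝ^d → (0,1)` is measurable, `κ(x) = p₀(x)·δ₀ + (1-p₀(x))·ν_x` is a Markov kernel
with each `ν_x` a nonatomic Borel probability measure on `ℝ` vanishing on `(-∞,0]`,
`F(y|x) = κ(x)((-∞,y])`, and the joint law of `(X,Y)` is `μ_X ⊗ κ`.  Then for every
`s ∈ (0,1)`, `Pr(F(Y|X) ≤ s) = s · μ_X({x : p₀(x) ≤ s})`. -/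
theorem stmt2 {d : ℕ} {Ω : Type*} [MeasurableSpace Ω] (P : Measure Ω)
    [IsProbabilityMeasure P]
    (X : Ω → (Fin d → ℝ)) (hX : Measurable X)
    (Y : Ω → ℝ) (hY : Measurable Y)
    (μX : Measure (Fin d → ℝ)) (hμX : μX = P.map X)
    (p₀ : (Fin d → ℝ) → ℝ) (hp₀ : Measurable p₀)
    (hp₀mem : ∀ x, p₀ x ∈ Set.Ioo (0 : ℝ) 1)
    (ν : (Fin d → ℝ) → Measure ℝ) (hν : ∀ x, IsProbabilityMeasure (ν x))
    (hν0 : ∀ x, ν x (Set.Iic 0) = 0) (hνatom : ∀ x, NoAtoms (ν x))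
    (κ : Kernel (Fin d → ℝ) ℝ) [IsMarkovKernel κ]
    (hκ : ∀ x, κ x = ENNReal.ofReal (p₀ x) • Measure.dirac 0
        + ENNReal.ofReal (1 - p₀ x) • ν x)
    (F : ℝ → (Fin d → ℝ) → ℝ) (hF : ∀ y x, F y x = (κ x (Set.Iic y)).toReal)
    (hjoint : P.map (fun ω => (X ω, Y ω)) = μX ⊗ₘ κ)
    (s : ℝ) (hs : s ∈ Set.Ioo (0 : ℝ) 1) :
    P {ω : Ω | F (Y ω) (X ω) ≤ s} = ENNReal.ofReal s * μX {x | p₀ x ≤ s} := by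
  obtain ⟨hs0, hs1⟩ := hs
  have hμXprob : IsProbabilityMeasure μX := by
    rw [hμX]; exact Measure.isProbabilityMeasure_map hX.aemeasurable
  -- joint measurability of (x, y) ↦ κ x (Iic y)
  have hG : Measurable (fun q : (Fin d → ℝ) × ℝ => κ q.1 (Iic q.2)) := by
    have ht : MeasurableSet {q : ((Fin d → ℝ) × ℝ) × ℝ | q.2 ≤ q.1.2} :=
      measurableSet_le measurable_snd measurable_fst.snd
    exact Kernel.measurable_kernel_prodMk_left
      (κ := κ.comap Prod.fst measurable_fst) ht
  set T : Set ((Fin d → ℝ) × ℝ) := {q | (κ q.1 (Iic q.2)).toReal ≤ s} with hT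
  have hTm : MeasurableSet T := hG.ennreal_toReal measurableSet_Iic
  have hsetω : {ω : Ω | F (Y ω) (X ω) ≤ s} = (fun ω => (X ω, Y ω)) ⁻¹' T := by
    ext ω; simp [hT, hF]
  rw [hsetω, ← Measure.map_apply (hX.prodMk hY) hTm, hjoint, Measure.compProd_apply hTm]
  -- pointwise computation
  have hpt : ∀ x, κ x (Prod.mk x ⁻¹' T)
      = Set.indicator {x | p₀ x ≤ s} (fun _ => ENNReal.ofReal s) x := by
    intro x
    haveI := hν x
    haveI : NullSingletonClass (ν x) := hνatom x
    obtain ⟨hp0, hp1⟩ := hp₀mem x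
    have hpre : Prod.mk x ⁻¹' T = {y | (κ x (Iic y)).toReal ≤ s} := rfl
    have hκIic : ∀ y, κ x (Iic y)
        = ENNReal.ofReal (p₀ x) * (Iic y).indicator 1 0
          + ENNReal.ofReal (1 - p₀ x) * ν x (Iic y) := by
      intro y
      rw [hκ x]
      simp [Measure.dirac_apply]
    have hconv : ∀ y, ((κ x (Iic y)).toReal ≤ s ↔ κ x (Iic y) ≤ ENNReal.ofReal s) :=
      fun y => (ENNReal.le_ofReal_iff_toReal_le (measure_ne_top _ _) hs0.le).symm
    by_cases hps : p₀ x ≤ s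
    · -- case p₀ x ≤ s
      set t := (s - p₀ x) / (1 - p₀ x) with htdef
      have ht0 : 0 ≤ t := div_nonneg (by linarith) (by linarith)
      have ht1 : t < 1 := (div_lt_one (by linarith)).2 (by linarith)
      set τ := ENNReal.ofReal t with hτdef
      have hτ1 : τ < 1 := ENNReal.ofReal_lt_one.2 ht1
      have hofs : ENNReal.ofReal s
          = ENNReal.ofReal (p₀ x) + ENNReal.ofReal (1 - p₀ x) * τ := by
        rw [hτdef, ← ENNReal.ofReal_mul (by linarith), htdef,
          mul_div_cancel₀ _ (by linarith : (1 : ℝ) - p₀ x ≠ 0),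
          ← ENNReal.ofReal_add (by linarith) (by linarith)]
        ring_nf
      have hset : {y | (κ x (Iic y)).toReal ≤ s} = {y | ν x (Iic y) ≤ τ} := by
        ext y
        rw [mem_setOf_eq, mem_setOf_eq, hconv y, hκIic y]
        rcases le_or_gt 0 y with hy | hy
        · have hind : (Iic y).indicator (1 : ℝ → ℝ≥0∞) 0 = 1 := by
            simp [indicator_of_mem, hy]
          rw [hind, mul_one, hofs,
            ENNReal.add_le_add_iff_left ENNReal.ofReal_ne_top,
            ENNReal.mul_le_mul_iff_right (by simp [ENNReal.ofReal_eq_zero]; linarith)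
              ENNReal.ofReal_ne_top]
        · have hind : (Iic y).indicator (1 : ℝ → ℝ≥0∞) 0 = 0 := by
            simp [indicator_of_notMem, not_le.2 hy]
          have hν0y : ν x (Iic y) = 0 :=
            measure_mono_null (Iic_subset_Iic.2 hy.le) (hν0 x)
          simp [hind, hν0y]
      have h0mem : (0 : ℝ) ∈ {y | ν x (Iic y) ≤ τ} := by
        simp [hν0 x]
      have hkey := key (ν x) (hν0 x) τ hτ1
      rw [hpre, hset, hκ x, Set.indicator_of_mem (show x ∈ {x | p₀ x ≤ s} from hps)]
      simp only [Measure.coe_add, Measure.coe_smul, Pi.add_apply, Pi.smul_apply,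
        smul_eq_mul]
      rw [hkey, Measure.dirac_apply, Set.indicator_of_mem h0mem, hofs]
      simp
    · -- case s < p₀ x
      have hsub : Prod.mk x ⁻¹' T ⊆ Iio 0 := by
        intro y hy
        rw [hpre, mem_setOf_eq, hconv, hκIic] at hy
        by_contra hy0
        rw [mem_Iio, not_lt] at *
        have hind : (Iic y).indicator (1 : ℝ → ℝ≥0∞) 0 = 1 := by
          simp [indicator_of_mem, hy0]
        rw [hind, mul_one] at hy
        have : ENNReal.ofReal (p₀ x) ≤ ENNReal.ofReal s := le_trans le_self_add hy
        rw [ENNReal.ofReal_le_ofReal_iff hs0.le] at this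
        linarith [not_le.1 hps]
      have hIio0 : κ x (Iio 0) = 0 := by
        rw [hκ x]
        simp only [Measure.coe_add, Measure.coe_smul, Pi.add_apply, Pi.smul_apply,
          smul_eq_mul]
        have h1 : Measure.dirac (0:ℝ) (Iio 0) = 0 := by
          simp [Measure.dirac_apply]
        have h2 : ν x (Iio 0) = 0 :=
          measure_mono_null Iio_subset_Iic_self (hν0 x)
        rw [h1, h2, mul_zero, mul_zero, add_zero]
      rw [measure_mono_null hsub hIio0]
      rw [Set.indicator_of_notMem (by simpa using hps)]
  calc ∫⁻ a, κ a (Prod.mk a ⁻¹' T) ∂μX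
      = ∫⁻ a, Set.indicator {x | p₀ x ≤ s} (fun _ => ENNReal.ofReal s) a ∂μX := by
        exact lintegral_congr hpt
    _ = ENNReal.ofReal s * μX {x | p₀ x ≤ s} := by
        rw [lintegral_indicator (show MeasurableSet {x | p₀ x ≤ s} from hp₀ measurableSet_Iic),
          setLIntegral_const]
end

section
/- Assume each ν_x has no atoms, and suppose there exists s ∈ (0,1) such that μ_X({x : p₀(x) ≤ s}) < 1. Then the law of F(Y|X) is not the uniform distribution on [0,1] (Lebesgue measure restricted to [0,1]); i.e., in the presence of a point mass at zero the probability integral transform of the outcome is not uniformly distributed. -/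
open MeasureTheory ProbabilityTheory Set Filter Topology
open scoped ENNReal ProbabilityTheory

private lemma quantile_meas (ν : Measure ℝ) [IsProbabilityMeasure ν] [NullSingletonClass ν]
    (h0 : ν (Set.Iic 0) = 0) {u : ℝ} (hu0 : 0 ≤ u) (hu1 : u < 1) :
    ν {y | (ν (Set.Iic y)).toReal ≤ u} = ENNReal.ofReal u := by
  set G : ℝ → ℝ := fun y => (ν (Set.Iic y)).toReal with hGdef
  have hfin : ∀ y : ℝ, ν (Set.Iic y) ≠ ∞ := fun y => measure_ne_top ν _
  have hmono : Monotone G := fun a b hab =>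
    ENNReal.toReal_mono (hfin b) (measure_mono (Set.Iic_subset_Iic.mpr hab))
  set T : Set ℝ := {y | G y ≤ u} with hTdef
  have h0T : (0 : ℝ) ∈ T := by
    simp only [hTdef, Set.mem_setOf_eq, hGdef, h0, ENNReal.toReal_zero]; exact hu0
  -- there is y₀ with u < G y₀
  obtain ⟨y₀, hy₀⟩ : ∃ y₀, u < G y₀ := by
    have h1 : Tendsto (fun y => ν (Set.Iic y)) atTop (𝓝 (ν Set.univ)) :=
      tendsto_measure_Iic_atTop ν
    rw [measure_univ] at h1
    have h2 : Tendsto G atTop (𝓝 (1 : ℝ)) := by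
      have := (ENNReal.tendsto_toReal (by norm_num : (1:ℝ≥0∞) ≠ ∞)).comp h1
      exact this
    exact (h2.eventually (eventually_gt_nhds hu1)).exists
  have hbdd : BddAbove T := by
    refine ⟨y₀, fun t ht => ?_⟩
    by_contra hlt
    push_neg at hlt
    exact absurd (le_trans (hmono hlt.le) ht) (not_le.mpr hy₀)
  set c : ℝ := sSup T with hcdef
  have hsub1 : Set.Iio c ⊆ T := by
    intro y hy
    obtain ⟨t, ht, hyt⟩ := exists_lt_of_lt_csSup ⟨0, h0T⟩ hy
    exact le_trans (hmono hyt.le) ht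
  have hsub2 : T ⊆ Set.Iic c := fun t ht => le_csSup hbdd ht
  have hIioIic : ν (Set.Iio c) = ν (Set.Iic c) := measure_congr Iio_ae_eq_Iic
  -- upper bound
  have hupper : ν (Set.Iic c) ≤ ENNReal.ofReal u := by
    rw [← hIioIic]
    have hUn : (⋃ n : ℕ, Set.Iic (c - 1 / (n + 1))) = Set.Iio c := by
      ext y
      simp only [Set.mem_iUnion, Set.mem_Iic, Set.mem_Iio]
      constructor
      · rintro ⟨n, hn⟩
        have : (0:ℝ) < 1 / (n + 1) := by positivity
        linarith
      · intro hy
        obtain ⟨n, hn⟩ := exists_nat_one_div_lt (sub_pos.mpr hy)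
        exact ⟨n, by push_cast at hn ⊢; linarith⟩
    have hmon : Monotone fun n : ℕ => Set.Iic (c - 1 / (n + 1)) := by
      intro a b hab
      apply Set.Iic_subset_Iic.mpr
      have hab' : (a:ℝ) ≤ b := Nat.cast_le.mpr hab
      have : (1:ℝ) / (b + 1) ≤ 1 / (a + 1) := by
        apply one_div_le_one_div_of_le (by positivity)
        linarith
      linarith
    have htend := tendsto_measure_iUnion_atTop (μ := ν) hmon
    rw [hUn] at htend
    refine le_of_tendsto htend (Filter.Eventually.of_forall fun n => ?_)
    have hmem : c - 1 / (n + 1) ∈ T := by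
      apply hsub1
      have hp : (0:ℝ) < 1/(n+1) := by positivity
      simp only [Set.mem_Iio]
      linarith
    exact (ENNReal.le_ofReal_iff_toReal_le (hfin _) hu0).mpr hmem
  -- lower bound
  have hlower : ENNReal.ofReal u ≤ ν (Set.Iic c) := by
    have hInt : (⋂ n : ℕ, Set.Iic (c + 1 / (n + 1))) = Set.Iic c := by
      ext y
      simp only [Set.mem_iInter, Set.mem_Iic]
      constructor
      · intro h
        by_contra hyc
        push_neg at hyc
        obtain ⟨n, hn⟩ := exists_nat_one_div_lt (sub_pos.mpr hyc)
        have := h n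
        linarith
      · intro h n
        have : (0:ℝ) < 1/(n+1) := by positivity
        linarith
    have hant : Antitone fun n : ℕ => Set.Iic (c + 1 / (n + 1)) := by
      intro a b hab
      apply Set.Iic_subset_Iic.mpr
      have hab' : (a:ℝ) ≤ b := Nat.cast_le.mpr hab
      have : (1:ℝ) / (b + 1) ≤ 1 / (a + 1) := by
        apply one_div_le_one_div_of_le (by positivity)
        linarith
      linarith
    have htend := tendsto_measure_iInter_atTop (μ := ν)
      (fun n => measurableSet_Iic.nullMeasurableSet) hant ⟨0, hfin _⟩
    rw [hInt] at htend
    refine ge_of_tendsto htend (Filter.Eventually.of_forall fun n => ?_)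
    have hnot : c + 1 / (n + 1) ∉ T := by
      intro hmem
      have := hsub2 hmem
      simp only [Set.mem_Iic] at this
      have hpos : (0:ℝ) < 1/(n+1) := by positivity
      linarith
    simp only [hTdef, Set.mem_setOf_eq, not_le] at hnot
    calc ENNReal.ofReal u ≤ ENNReal.ofReal (G (c + 1 / (n + 1))) :=
          ENNReal.ofReal_le_ofReal hnot.le
      _ = ν (Set.Iic (c + 1 / (n + 1))) := ENNReal.ofReal_toReal (hfin _)
  have hνT : ν T = ν (Set.Iic c) := by
    refine le_antisymm (measure_mono hsub2) ?_
    rw [← hIioIic]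
    exact measure_mono hsub1
  rw [hνT]
  exact le_antisymm hupper hlower

/-- In the semicontinuous regression setup (each `ν_x` nonatomic), if there
exists `s ∈ (0,1)` with `μ_X({x : p₀(x) ≤ s}) < 1`, then the law of the probability
integral transform `F(Y|X)` is not the uniform distribution on `[0,1]` (Lebesgue measure
restricted to `[0,1]`). -/
theorem stmt3 {d : ℕ} {Ω : Type*} [MeasurableSpace Ω] (P : Measure Ω)
    [IsProbabilityMeasure P]
    (X : Ω → (Fin d → ℝ)) (hX : Measurable X)
    (Y : Ω → ℝ) (hY : Measurable Y)
    (μX : Measure (Fin d → ℝ)) (hμX : μX = P.map X)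
    (p₀ : (Fin d → ℝ) → ℝ) (hp₀ : Measurable p₀)
    (hp₀mem : ∀ x, p₀ x ∈ Set.Ioo (0 : ℝ) 1)
    (ν : (Fin d → ℝ) → Measure ℝ) (hν : ∀ x, IsProbabilityMeasure (ν x))
    (hν0 : ∀ x, ν x (Set.Iic 0) = 0) (hνatom : ∀ x, NoAtoms (ν x))
    (κ : Kernel (Fin d → ℝ) ℝ) [IsMarkovKernel κ]
    (hκ : ∀ x, κ x = ENNReal.ofReal (p₀ x) • Measure.dirac 0
        + ENNReal.ofReal (1 - p₀ x) • ν x)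
    (F : ℝ → (Fin d → ℝ) → ℝ) (hF : ∀ y x, F y x = (κ x (Set.Iic y)).toReal)
    (hjoint : P.map (fun ω => (X ω, Y ω)) = μX ⊗ₘ κ)
    (hexists : ∃ s ∈ Set.Ioo (0 : ℝ) 1, μX {x | p₀ x ≤ s} < 1) :
    P.map (fun ω => F (Y ω) (X ω)) ≠ volume.restrict (Set.Icc (0 : ℝ) 1) := by
  obtain ⟨s, ⟨hs0, hs1⟩, hmlt⟩ := hexists
  intro heq
  haveI : IsProbabilityMeasure μX := hμX ▸ Measure.isProbabilityMeasure_map hX.aemeasurable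
  -- measurability of (x,y) ↦ κ x (Iic y)
  have htset : MeasurableSet {p : ((Fin d → ℝ) × ℝ) × ℝ | p.2 ≤ p.1.2} :=
    measurableSet_le measurable_snd (measurable_fst.snd)
  have hφ : Measurable fun p : (Fin d → ℝ) × ℝ => κ p.1 (Set.Iic p.2) := by
    have h := Kernel.measurable_kernel_prodMk_left
      (κ := κ.comap Prod.fst measurable_fst) htset
    exact h
  have hFmeas : Measurable fun p : (Fin d → ℝ) × ℝ => F p.2 p.1 := by
    simp only [hF]
    exact hφ.ennreal_toReal
  set S : Set ((Fin d → ℝ) × ℝ) := {p | F p.2 p.1 ≤ s} with hSdef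
  have hS : MeasurableSet S := measurableSet_le hFmeas measurable_const
  have hg : Measurable fun ω => F (Y ω) (X ω) := hFmeas.comp (hX.prodMk hY)
  -- explicit formula for F
  have hFy : ∀ y x, F y x =
      if 0 ≤ y then p₀ x + (1 - p₀ x) * (ν x (Set.Iic y)).toReal else 0 := by
    intro y x
    have hp := hp₀mem x
    haveI := hν x
    rw [hF, hκ]
    simp only [Measure.coe_add, Measure.coe_smul, Pi.add_apply, Pi.smul_apply,
      smul_eq_mul]
    by_cases hy : 0 ≤ y
    · rw [if_pos hy]
      rw [Measure.dirac_apply' _ measurableSet_Iic,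
        Set.indicator_of_mem (by exact hy) (1 : ℝ → ℝ≥0∞)]
      simp only [Pi.one_apply, mul_one]
      rw [ENNReal.toReal_add (by simp) (ENNReal.mul_ne_top (by simp) (measure_ne_top _ _))]
      rw [ENNReal.toReal_ofReal hp.1.le, ENNReal.toReal_mul,
        ENNReal.toReal_ofReal (by linarith [hp.2])]
    · rw [if_neg hy]
      push_neg at hy
      rw [Measure.dirac_apply' _ measurableSet_Iic,
        Set.indicator_of_notMem (by simpa using hy) (1 : ℝ → ℝ≥0∞)]
      have hν0' : ν x (Set.Iic y) = 0 :=
        measure_mono_null (Set.Iic_subset_Iic.mpr hy.le) (hν0 x)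
      simp [hν0']
  -- pointwise kernel mass of the event {F ≤ s}
  have hker : ∀ x, κ x {y | F y x ≤ s} =
      Set.indicator {x | p₀ x ≤ s} (fun _ => ENNReal.ofReal s) x := by
    intro x
    have hp := hp₀mem x
    haveI := hν x
    haveI : NullSingletonClass (ν x) := hνatom x
    have h1p : (0:ℝ) < 1 - p₀ x := by linarith [hp.2]
    by_cases hps : p₀ x ≤ s
    · rw [Set.indicator_of_mem (by exact hps)]
      set u : ℝ := (s - p₀ x) / (1 - p₀ x) with hudef
      have hu0 : 0 ≤ u := div_nonneg (by linarith) h1p.le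
      have hu1 : u < 1 := (div_lt_one h1p).mpr (by linarith)
      have hset : {y | F y x ≤ s} = {y | (ν x (Set.Iic y)).toReal ≤ u} := by
        ext y
        simp only [Set.mem_setOf_eq, hFy]
        by_cases hy : 0 ≤ y
        · rw [if_pos hy]
          rw [hudef, le_div_iff₀ h1p]
          constructor <;> intro h <;> nlinarith
        · rw [if_neg hy]
          push_neg at hy
          have hν0' : ν x (Set.Iic y) = 0 :=
            measure_mono_null (Set.Iic_subset_Iic.mpr hy.le) (hν0 x)
          simp [hν0', hs0.le, hu0]
      rw [hset, hκ]
      have hTmeas : MeasurableSet {y | (ν x (Set.Iic y)).toReal ≤ u} := by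
        have hm : Monotone fun y => (ν x (Set.Iic y)).toReal := fun a b hab =>
          ENNReal.toReal_mono (measure_ne_top _ _)
            (measure_mono (Set.Iic_subset_Iic.mpr hab))
        exact hm.measurable measurableSet_Iic
      simp only [Measure.coe_add, Measure.coe_smul, Pi.add_apply, Pi.smul_apply,
        smul_eq_mul]
      rw [quantile_meas (ν x) (hν0 x) hu0 hu1]
      rw [Measure.dirac_apply' _ hTmeas,
        Set.indicator_of_mem (by simp only [Set.mem_setOf_eq, hν0 x]; simpa using hu0)
          (1 : ℝ → ℝ≥0∞), Pi.one_apply, mul_one]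
      rw [← ENNReal.ofReal_mul h1p.le, ← ENNReal.ofReal_add hp.1.le
        (by nlinarith : (0:ℝ) ≤ (1 - p₀ x) * u)]
      congr 1
      rw [hudef]
      field_simp
      ring
    · rw [Set.indicator_of_notMem (by exact hps)]
      push_neg at hps
      have hset : {y | F y x ≤ s} = Set.Iio 0 := by
        ext y
        simp only [Set.mem_setOf_eq, hFy, Set.mem_Iio]
        by_cases hy : 0 ≤ y
        · rw [if_pos hy]
          have hG : 0 ≤ (ν x (Set.Iic y)).toReal := ENNReal.toReal_nonneg
          constructor
          · intro h; nlinarith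
          · intro h; linarith
        · rw [if_neg hy]; push_neg at hy; simp [hy, hs0.le]
      rw [hset, hκ]
      simp only [Measure.coe_add, Measure.coe_smul, Pi.add_apply, Pi.smul_apply,
        smul_eq_mul]
      have hd : Measure.dirac (0:ℝ) (Set.Iio 0) = 0 := by
        rw [Measure.dirac_apply' _ measurableSet_Iio,
          Set.indicator_of_notMem (by simp) (1 : ℝ → ℝ≥0∞)]
      have hνIio : ν x (Set.Iio 0) = 0 :=
        measure_mono_null Set.Iio_subset_Iic_self (hν0 x)
      simp [hd, hνIio]
  -- compute the law of the PIT on Iic s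
  have hLHS : (P.map fun ω => F (Y ω) (X ω)) (Set.Iic s)
      = ENNReal.ofReal s * μX {x | p₀ x ≤ s} := by
    rw [Measure.map_apply hg measurableSet_Iic]
    have hpre : (fun ω => F (Y ω) (X ω)) ⁻¹' Set.Iic s
        = (fun ω => (X ω, Y ω)) ⁻¹' S := rfl
    rw [hpre, ← Measure.map_apply (hX.prodMk hY) hS, hjoint,
      Measure.compProd_apply hS]
    have hpre2 : ∀ x, (Prod.mk x ⁻¹' S) = {y | F y x ≤ s} := fun x => rfl
    simp_rw [hpre2, hker]
    rw [lintegral_indicator (measurableSet_le hp₀ measurable_const)]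
    rw [setLIntegral_const]
  -- compute the uniform measure on Iic s
  have hRHS : (volume.restrict (Set.Icc (0:ℝ) 1)) (Set.Iic s) = ENNReal.ofReal s := by
    rw [Measure.restrict_apply measurableSet_Iic]
    have : Set.Iic s ∩ Set.Icc (0:ℝ) 1 = Set.Icc 0 s := by
      ext t
      simp only [Set.mem_inter_iff, Set.mem_Iic, Set.mem_Icc]
      constructor
      · rintro ⟨h1, h2, h3⟩; exact ⟨h2, h1⟩
      · rintro ⟨h1, h2⟩; exact ⟨h2, h1, by linarith⟩
    rw [this, Real.volume_Icc, sub_zero]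
  rw [heq, hRHS] at hLHS
  have hne0 : ENNReal.ofReal s ≠ 0 := by simp [hs0]
  have hnetop : ENNReal.ofReal s ≠ ∞ := ENNReal.ofReal_ne_top
  have hlt : ENNReal.ofReal s * μX {x | p₀ x ≤ s} < ENNReal.ofReal s * 1 :=
    ENNReal.mul_lt_mul_right hne0 hnetop hmlt
  rw [mul_one, ← hLHS] at hlt
  exact absurd hlt (lt_irrefl _)
end

section
/- Assume each ν_x has no atoms and the law of p₀(X) (the pushforward of μ_X by p₀) has no atoms. Then the law of the random variable F(Y|X) has no atoms. -/
open MeasureTheory ProbabilityTheory Set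
open scoped ENNReal ProbabilityTheory

/-- For a finite atomless measure on ℝ, any level set of its CDF is null. -/
lemma cdf_level_set_null (ρ : Measure ℝ) [IsFiniteMeasure ρ] [NullSingletonClass ρ] (s : ℝ≥0∞) :
    ρ {y | ρ (Set.Iic y) = s} = 0 := by
  set S := {y | ρ (Set.Iic y) = s} with hSdef
  have hIoc : ∀ a b : ℝ, a ∈ S → b ∈ S → ρ (Set.Ioc a b) = 0 := by
    intro a b ha hb
    rcases le_or_gt b a with h | h
    · rw [Set.Ioc_eq_empty (not_lt.mpr h), measure_empty]
    · have he : Set.Ioc a b = Set.Iic b \ Set.Iic a := by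
        ext z; simp [Set.mem_Ioc, and_comm, not_le]
      rw [he, measure_diff (Set.Iic_subset_Iic.mpr h.le)
        measurableSet_Iic.nullMeasurableSet (measure_ne_top ρ _), ha, hb, tsub_self]
  have hcover : S ⊆ ({y | y ∈ S ∧ ∀ b ∈ S, b ≤ y} ∪ {y | y ∈ S ∧ ∀ b ∈ S, y ≤ b}) ∪
      ⋃ (q : ℚ) (r : ℚ) (_ : ρ (Set.Ioc (q : ℝ) (r : ℝ)) = 0), Set.Ioc (q : ℝ) (r : ℝ) := by
    intro y hy
    by_cases hmax : ∀ b ∈ S, b ≤ y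
    · exact Or.inl (Or.inl ⟨hy, hmax⟩)
    by_cases hmin : ∀ b ∈ S, y ≤ b
    · exact Or.inl (Or.inr ⟨hy, hmin⟩)
    push_neg at hmax hmin
    obtain ⟨b2, hb2S, hb2⟩ := hmax
    obtain ⟨b1, hb1S, hb1⟩ := hmin
    obtain ⟨q, hq1, hq2⟩ := exists_rat_btwn hb1
    obtain ⟨r, hr1, hr2⟩ := exists_rat_btwn hb2
    refine Or.inr (Set.mem_iUnion.mpr ⟨q, Set.mem_iUnion.mpr ⟨r, Set.mem_iUnion.mpr
      ⟨?_, hq2, hr1.le⟩⟩⟩)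
    exact measure_mono_null (Set.Ioc_subset_Ioc hq1.le hr2.le) (hIoc b1 b2 hb1S hb2S)
  refine measure_mono_null hcover ?_
  refine measure_union_null (measure_union_null ?_ ?_) ?_
  · refine Set.Subsingleton.measure_zero ?_ ρ
    rintro x ⟨hx, hx'⟩ y ⟨hy, hy'⟩
    exact le_antisymm (hy' x hx) (hx' y hy)
  · refine Set.Subsingleton.measure_zero ?_ ρ
    rintro x ⟨hx, hx'⟩ y ⟨hy, hy'⟩
    exact le_antisymm (hx' y hy) (hy' x hx)
  · refine measure_iUnion_null fun q => measure_iUnion_null fun r =>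
      measure_iUnion_null fun h => h

/-- In the semicontinuous regression setup, if each `ν_x` has no atoms and
the law of `p₀(X)` has no atoms, then the law of `F(Y|X)` has no atoms. -/
theorem stmt4 {d : ℕ} {Ω : Type*} [MeasurableSpace Ω] (P : Measure Ω)
    [IsProbabilityMeasure P]
    (X : Ω → (Fin d → ℝ)) (hX : Measurable X)
    (Y : Ω → ℝ) (hY : Measurable Y)
    (μX : Measure (Fin d → ℝ)) (hμX : μX = P.map X)
    (p₀ : (Fin d → ℝ) → ℝ) (hp₀ : Measurable p₀)
    (hp₀mem : ∀ x, p₀ x ∈ Set.Ioo (0 : ℝ) 1)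
    (ν : (Fin d → ℝ) → Measure ℝ) (hν : ∀ x, IsProbabilityMeasure (ν x))
    (hν0 : ∀ x, ν x (Set.Iic 0) = 0) (hνatom : ∀ x, NoAtoms (ν x))
    (κ : Kernel (Fin d → ℝ) ℝ) [IsMarkovKernel κ]
    (hκ : ∀ x, κ x = ENNReal.ofReal (p₀ x) • Measure.dirac 0
        + ENNReal.ofReal (1 - p₀ x) • ν x)
    (F : ℝ → (Fin d → ℝ) → ℝ) (hF : ∀ y x, F y x = (κ x (Set.Iic y)).toReal)
    (hjoint : P.map (fun ω => (X ω, Y ω)) = μX ⊗ₘ κ)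
    (hp₀X : NoAtoms (P.map (fun ω => p₀ (X ω)))) :
    NoAtoms (P.map (fun ω => F (Y ω) (X ω))) := by
  -- measurability of (x, y) ↦ κ x (Iic y)
  have hgmeas : Measurable fun p : (Fin d → ℝ) × ℝ => κ p.1 (Set.Iic p.2) := by
    have ht : MeasurableSet {p : ((Fin d → ℝ) × ℝ) × ℝ | p.2 ≤ p.1.2} :=
      measurableSet_le measurable_snd measurable_fst.snd
    have := ProbabilityTheory.Kernel.measurable_kernel_prodMk_left
      (κ := κ.comap Prod.fst measurable_fst) ht
    convert this using 2 with p
    rfl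
  have hg : Measurable fun p : (Fin d → ℝ) × ℝ => F p.2 p.1 := by
    simp only [hF]
    exact hgmeas.ennreal_toReal
  have hPMμX : IsProbabilityMeasure μX := by
    rw [hμX]; exact Measure.isProbabilityMeasure_map hX.aemeasurable
  constructor
  intro c
  have hmapeq : P.map (fun ω => F (Y ω) (X ω)) = (μX ⊗ₘ κ).map (fun p => F p.2 p.1) := by
    rw [← hjoint, Measure.map_map hg (hX.prodMk hY)]
    rfl
  rw [hmapeq, Measure.map_apply hg (measurableSet_singleton c)]
  have hpre : MeasurableSet ((fun p : (Fin d → ℝ) × ℝ => F p.2 p.1) ⁻¹' {c}) :=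
    hg (measurableSet_singleton c)
  rw [Measure.compProd_apply hpre]
  -- the set of x with p₀ x = c is μX-null
  have hμXnull : μX {x | p₀ x = c} = 0 := by
    have h0 : (P.map (fun ω => p₀ (X ω))) {c} = 0 := (hp₀X : NullSingletonClass _).measure_singleton c
    rw [Measure.map_apply (f := fun ω => p₀ (X ω)) (hp₀.comp hX)
      (measurableSet_singleton c)] at h0
    rw [hμX, show {x | p₀ x = c} = p₀ ⁻¹' {c} from rfl,
      Measure.map_apply hX (hp₀ (measurableSet_singleton c))]
    exact h0
  have hae : ∀ᵐ x ∂μX, p₀ x ≠ c := by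
    rw [ae_iff]; simpa using hμXnull
  rw [← lintegral_zero (μ := μX)]
  refine lintegral_congr_ae ?_
  filter_upwards [hae] with x hx
  -- for such x, show κ x {y | F y x = c} = 0
  have hpx := hp₀mem x
  have hq : (0:ℝ) < 1 - p₀ x := by linarith [hpx.2]
  have hκIic : ∀ y : ℝ, κ x (Set.Iic y) = ENNReal.ofReal (p₀ x) * (Measure.dirac 0) (Set.Iic y)
      + ENNReal.ofReal (1 - p₀ x) * ν x (Set.Iic y) := by
    intro y
    rw [hκ x]
    simp [Measure.add_apply, Measure.smul_apply, smul_eq_mul]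
  have hνfin : ∀ S : Set ℝ, ν x S ≠ ⊤ := fun S => measure_ne_top (ν x) S
  have hFform : ∀ y : ℝ, 0 < y → F y x = p₀ x + (1 - p₀ x) * (ν x (Set.Iic y)).toReal := by
    intro y hy
    have hkey : κ x (Set.Iic y)
        = ENNReal.ofReal (p₀ x) + ENNReal.ofReal (1 - p₀ x) * ν x (Set.Iic y) := by
      rw [hκIic y, Measure.dirac_apply' _ measurableSet_Iic,
        Set.indicator_of_mem (by simpa using hy.le : (0:ℝ) ∈ Set.Iic y),
        Pi.one_apply, mul_one]
    rw [hF, hkey, ENNReal.toReal_add ENNReal.ofReal_ne_top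
      (ENNReal.mul_ne_top ENNReal.ofReal_ne_top (hνfin _)),
      ENNReal.toReal_mul, ENNReal.toReal_ofReal hpx.1.le, ENNReal.toReal_ofReal hq.le]
  have hSmeas : MeasurableSet {y : ℝ | F y x = c} := by
    have : Measurable fun y : ℝ => F y x := by
      simp only [hF]
      exact (hgmeas.comp (measurable_const.prodMk measurable_id)).ennreal_toReal
    exact this (measurableSet_singleton c)
  have hset : Prod.mk x ⁻¹' ((fun p : (Fin d → ℝ) × ℝ => F p.2 p.1) ⁻¹' {c})
      = {y : ℝ | F y x = c} := rfl
  rw [hset, hκ x, Measure.add_apply, Measure.smul_apply, Measure.smul_apply,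
    smul_eq_mul, smul_eq_mul]
  have hdirac : (Measure.dirac (0:ℝ)) {y : ℝ | F y x = c} = 0 := by
    rw [Measure.dirac_apply' _ hSmeas]
    refine Set.indicator_of_notMem ?_ _
    intro h0
    apply hx
    have : F 0 x = p₀ x := by
      rw [hF, hκIic 0, hν0 x, Measure.dirac_apply' _ measurableSet_Iic,
        Set.indicator_of_mem (by simp : (0:ℝ) ∈ Set.Iic 0), Pi.one_apply,
        mul_one, mul_zero, add_zero, ENNReal.toReal_ofReal hpx.1.le]
    rw [← this]
    exact h0
  have hνS : ν x {y : ℝ | F y x = c} = 0 := by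
    set t : ℝ := (c - p₀ x) / (1 - p₀ x) with ht
    have hsub : {y : ℝ | F y x = c} ⊆
        Set.Iic 0 ∪ {y : ℝ | ν x (Set.Iic y) = ENNReal.ofReal t} := by
      intro y hy
      rcases le_or_gt y 0 with h | h
      · exact Or.inl h
      · refine Or.inr ?_
        have hFy := hFform y h
        rw [hy] at hFy
        have hG : (ν x (Set.Iic y)).toReal = t := by
          rw [ht, eq_div_iff hq.ne']
          linarith [hFy]
        have : ν x (Set.Iic y) = ENNReal.ofReal ((ν x (Set.Iic y)).toReal) :=
          (ENNReal.ofReal_toReal (hνfin _)).symm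
        rw [Set.mem_setOf_eq, this, hG]
    have := hν x
    have : NullSingletonClass (ν x) := hνatom x
    exact measure_mono_null hsub
      (measure_union_null (hν0 x) (cdf_level_set_null (ν x) (ENNReal.ofReal t)))
  rw [hdirac, hνS, mul_zero, mul_zero, add_zero]
end

section
/- Assume each ν_x has no atoms and the law of p₀(X) has no atoms. Then the random variable H(F(Y|X)) is uniformly distributed on [0,1]: the law of ω ↦ H(F(Y(ω)|X(ω))) equals Lebesgue measure restricted to [0,1]. (This is the null distribution of the proposed residuals under a correctly specified model.) -/
open MeasureTheory ProbabilityTheory Set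
open scoped ENNReal ProbabilityTheory


section Stmt5Aux
open Filter Topology


lemma lemA (μ : Measure ℝ) [IsProbabilityMeasure μ] {t : ℝ} (ht0 : 0 ≤ t) (ht1 : t < 1)
    (hatom : ∀ a : ℝ, μ {a} ≠ 0 → (μ (Iic a)).toReal ≤ t) :
    μ {y | (μ (Iic y)).toReal ≤ t} = ENNReal.ofReal t := by
  have hfin : ∀ s : Set ℝ, μ s ≠ ∞ := fun s => measure_ne_top μ s
  set G : ℝ → ℝ := fun y => (μ (Iic y)).toReal with hGdef
  have hGval : ∀ y, μ (Iic y) = ENNReal.ofReal (G y) := fun y =>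
    (ENNReal.ofReal_toReal (hfin _)).symm
  have hGmono : Monotone G := fun a b hab =>
    ENNReal.toReal_mono (hfin _) (measure_mono (Iic_subset_Iic.2 hab))
  set S : Set ℝ := {y | G y ≤ t} with hSdef
  by_cases hSe : S = ∅
  · have ht : t = 0 := by
      by_contra h
      have ht' : 0 < t := lt_of_le_of_ne ht0 (Ne.symm h)
      -- μ (Iic (-n)) → μ ∅ = 0
      have hiInter : (⋂ n : ℕ, Iic (-(n:ℝ)+0)) = (∅ : Set ℝ) := by
        ext y; simp only [mem_iInter, mem_Iic, mem_empty_iff_false, iff_false, not_forall]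
        obtain ⟨n, hn⟩ := exists_nat_gt (-y)
        exact ⟨n, by push_neg; linarith⟩
      have htend : Tendsto (fun n : ℕ => μ (Iic (-(n:ℝ)+0))) atTop (𝓝 0) := by
        have := tendsto_measure_iInter_atTop (μ := μ)
          (s := fun n : ℕ => Iic (-(n:ℝ)+0))
          (fun n => measurableSet_Iic.nullMeasurableSet)
          (fun a b hab => Iic_subset_Iic.2 (by
            have := (Nat.cast_le (α:=ℝ)).2 hab; linarith))
          ⟨0, hfin _⟩
        rwa [hiInter, measure_empty] at this
      have : ∀ᶠ n : ℕ in atTop, μ (Iic (-(n:ℝ)+0)) < ENNReal.ofReal t :=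
        htend.eventually_lt_const (by simpa using ht')
      obtain ⟨n, hn⟩ := this.exists
      have : G (-(n:ℝ)+0) ≤ t := by
        have := ENNReal.toReal_mono ENNReal.ofReal_ne_top hn.le
        rwa [ENNReal.toReal_ofReal ht0] at this
      exact absurd (hSdef ▸ this : (-(n:ℝ)+0) ∈ S) (by simp [hSe])
    simp [hSe, ht]
  · have hne : S.Nonempty := nonempty_iff_ne_empty.2 hSe
    -- bounded above
    obtain ⟨y₀, hy₀⟩ : ∃ y₀, ENNReal.ofReal t < μ (Iic y₀) := by
      have htend := tendsto_measure_Iic_atTop μ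
      rw [measure_univ] at htend
      have : ∀ᶠ x : ℝ in atTop, ENNReal.ofReal t < μ (Iic x) :=
        htend.eventually_const_lt (by
          simpa using (ENNReal.ofReal_lt_one.2 ht1))
      exact this.exists
    have hy₀' : t < G y₀ := by
      have := ENNReal.toReal_lt_toReal ENNReal.ofReal_ne_top (hfin _) |>.2 hy₀
      rwa [ENNReal.toReal_ofReal ht0] at this
    have hbdd : BddAbove S := ⟨y₀, fun y hy => by
      by_contra h
      exact absurd (le_trans (hGmono (not_le.1 h).le) hy) (not_le.2 hy₀')⟩
    set s := sSup S with hs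
    have hub : ∀ y ∈ S, y ≤ s := fun y hy => le_csSup hbdd hy
    have hgt : ∀ y, s < y → t < G y := fun y hy => by
      by_contra h
      exact absurd (hub y (not_lt.1 h)) (not_le.2 hy)
    have hGs_ge : t ≤ G s := by
      have hiInter : (⋂ n : ℕ, Iic (s + 1/(n+1))) = Iic s := by
        ext y
        simp only [mem_iInter, mem_Iic]
        constructor
        · intro h
          refine le_of_forall_pos_le_add fun ε hε => ?_
          obtain ⟨n, hn⟩ := exists_nat_one_div_lt hε
          exact (h n).trans (by linarith)
        · intro h n
          have : (0:ℝ) < 1/(n+1) := by positivity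
          linarith
      have htend : Tendsto (fun n : ℕ => μ (Iic (s + 1/(n+1)))) atTop (𝓝 (μ (Iic s))) := by
        have := tendsto_measure_iInter_atTop (μ := μ)
          (s := fun n : ℕ => Iic (s + 1/(n+1)))
          (fun n => measurableSet_Iic.nullMeasurableSet)
          (fun a b hab => Iic_subset_Iic.2 (by
            have : (1:ℝ)/(b+1) ≤ 1/(a+1) := by
              apply one_div_le_one_div_of_le (by positivity) (by exact_mod_cast by linarith)
            linarith))
          ⟨0, hfin _⟩
        rwa [hiInter] at this
      have hged : ∀ n : ℕ, ENNReal.ofReal t ≤ μ (Iic (s + 1/(n+1))) := fun n => by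
        rw [hGval]
        refine ENNReal.ofReal_le_ofReal (hgt _ ?_).le
        have : (0:ℝ) < 1/((n:ℝ)+1) := by positivity
        linarith
      have := ge_of_tendsto htend (Eventually.of_forall hged)
      have := ENNReal.toReal_mono (hfin _) this
      rwa [ENNReal.toReal_ofReal ht0] at this
    by_cases hle : G s ≤ t
    · have hSeq : S = Iic s := by
        apply subset_antisymm
        · exact fun y hy => hub y hy
        · exact fun y hy => le_trans (hGmono hy) hle
      have hGst : G s = t := le_antisymm hle hGs_ge
      rw [hSdef] at hSeq ⊢
      rw [hSeq, hGval, hGst]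
    · exfalso
      push_neg at hle
      have hsa : μ {s} = 0 := by
        by_contra h
        exact absurd (hatom s h) (not_le.2 hle)
      have hIio : μ (Iio s) ≤ ENNReal.ofReal t := by
        have hiUnion : (⋃ n : ℕ, Iic (s - 1/(n+1))) = Iio s := by
          ext y
          simp only [mem_iUnion, mem_Iic, mem_Iio]
          constructor
          · rintro ⟨n, hn⟩
            have : (0:ℝ) < 1/(n+1) := by positivity
            linarith
          · intro h
            obtain ⟨n, hn⟩ := exists_nat_one_div_lt (sub_pos.2 h)
            exact ⟨n, by linarith⟩
        have htend : Tendsto (fun n : ℕ => μ (Iic (s - 1/(n+1)))) atTop (𝓝 (μ (Iio s))) := by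
          have := tendsto_measure_iUnion_atTop (μ := μ)
            (s := fun n : ℕ => Iic (s - 1/(n+1)))
            (fun a b hab => Iic_subset_Iic.2 (by
              have : (1:ℝ)/(b+1) ≤ 1/(a+1) := by
                apply one_div_le_one_div_of_le (by positivity) (by exact_mod_cast by linarith)
              linarith))
          rwa [hiUnion] at this
        refine le_of_tendsto htend (Eventually.of_forall fun n => ?_)
        obtain ⟨z, hz, hz'⟩ := exists_lt_of_lt_csSup hne
          (show s - 1/((n:ℝ)+1) < s from sub_lt_self s (by positivity))
        rw [hGval]
        exact ENNReal.ofReal_le_ofReal (le_trans (hGmono hz'.le) hz)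
      have hIic : μ (Iic s) ≤ ENNReal.ofReal t := by
        have : μ (Iic s) ≤ μ (Iio s) + μ {s} := by
          rw [← Iio_union_right]; exact measure_union_le _ _
        rw [hsa, add_zero] at this
        exact this.trans hIio
      have : G s ≤ t := by
        have := ENNReal.toReal_mono ENNReal.ofReal_ne_top hIic
        rwa [ENNReal.toReal_ofReal ht0] at this
      exact absurd this (not_le.2 hle)


/-- In the semicontinuous regression setup, if each `ν_x` has no atoms and
the law of `p₀(X)` has no atoms, then with `H(s) = s·Pr(p₀(X) ≤ s)`, the random variable
`H(F(Y|X))` is uniformly distributed on `[0,1]`: its law is Lebesgue measure restricted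
to `[0,1]`.  (Null distribution of the proposed residuals under a correct model.) -/
theorem stmt5 {d : ℕ} {Ω : Type*} [MeasurableSpace Ω] (P : Measure Ω)
    [IsProbabilityMeasure P]
    (X : Ω → (Fin d → ℝ)) (hX : Measurable X)
    (Y : Ω → ℝ) (hY : Measurable Y)
    (μX : Measure (Fin d → ℝ)) (hμX : μX = P.map X)
    (p₀ : (Fin d → ℝ) → ℝ) (hp₀ : Measurable p₀)
    (hp₀mem : ∀ x, p₀ x ∈ Set.Ioo (0 : ℝ) 1)
    (ν : (Fin d → ℝ) → Measure ℝ) (hν : ∀ x, IsProbabilityMeasure (ν x))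
    (hν0 : ∀ x, ν x (Set.Iic 0) = 0) (hνatom : ∀ x, NoAtoms (ν x))
    (κ : Kernel (Fin d → ℝ) ℝ) [IsMarkovKernel κ]
    (hκ : ∀ x, κ x = ENNReal.ofReal (p₀ x) • Measure.dirac 0
        + ENNReal.ofReal (1 - p₀ x) • ν x)
    (F : ℝ → (Fin d → ℝ) → ℝ) (hF : ∀ y x, F y x = (κ x (Set.Iic y)).toReal)
    (hjoint : P.map (fun ω => (X ω, Y ω)) = μX ⊗ₘ κ)
    (hp₀X : NoAtoms (P.map (fun ω => p₀ (X ω))))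
    (H : ℝ → ℝ) (hH : ∀ s ∈ Set.Icc (0 : ℝ) 1,
      H s = s * (P {ω | p₀ (X ω) ≤ s}).toReal) :
    P.map (fun ω => H (F (Y ω) (X ω))) = volume.restrict (Set.Icc (0 : ℝ) 1) := by
  classical
  haveI hμXP : IsProbabilityMeasure μX := hμX ▸ Measure.isProbabilityMeasure_map hX.aemeasurable
  -- joint measurability of the conditional CDF
  have hFmeas : Measurable fun p : (Fin d → ℝ) × ℝ => κ p.1 (Iic p.2) := by
    have hset : MeasurableSet {p : ((Fin d → ℝ) × ℝ) × ℝ | p.2 ≤ p.1.2} :=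
      measurableSet_le measurable_snd measurable_fst.snd
    exact ProbabilityTheory.Kernel.measurable_kernel_prodMk_left
      (κ := (Kernel.comap κ Prod.fst measurable_fst : Kernel ((Fin d → ℝ) × ℝ) ℝ)) hset
  set V : Ω → ℝ := fun ω => (κ (X ω) (Iic (Y ω))).toReal with hVdef
  have hV : Measurable V := (hFmeas.comp (hX.prodMk hY)).ennreal_toReal
  set c : ℝ → ℝ := fun s => (P {ω | p₀ (X ω) ≤ s}).toReal with hcdef
  set m : Measure ℝ := P.map (fun ω => p₀ (X ω)) with hmdef
  have hp₀Xm : Measurable fun ω => p₀ (X ω) := hp₀.comp hX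
  have hm : ∀ s, m (Iic s) = P {ω | p₀ (X ω) ≤ s} := fun s => by
    rw [hmdef, Measure.map_apply hp₀Xm measurableSet_Iic]; rfl
  have hc0 : ∀ s, 0 ≤ c s := fun s => ENNReal.toReal_nonneg
  have hc1 : ∀ s, c s ≤ 1 := fun s => by
    have := prob_le_one (μ := P) (s := {ω | p₀ (X ω) ≤ s})
    have := ENNReal.toReal_mono ENNReal.one_ne_top this
    simpa using this
  have hcmono : Monotone c := fun a b hab =>
    ENNReal.toReal_mono (measure_ne_top _ _)
      (measure_mono (fun ω hω => le_trans hω hab))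
  have hcone : ∀ s, 1 ≤ s → c s = 1 := fun s hs => by
    have : {ω | p₀ (X ω) ≤ s} = univ := by
      ext ω; simp only [mem_setOf_eq, mem_univ, iff_true]
      exact le_trans (hp₀mem (X ω)).2.le hs
    rw [hcdef]; simp only [this, measure_univ, ENNReal.toReal_one]
  set Hs : ℝ → ℝ := fun s => s * c s with hHsdef
  have hHsmeas : Measurable Hs := measurable_id.mul (hcmono.measurable)
  have hVmem : ∀ ω, V ω ∈ Icc (0:ℝ) 1 := fun ω => by
    constructor
    · exact ENNReal.toReal_nonneg
    · have h1 : κ (X ω) (Iic (Y ω)) ≤ 1 := prob_le_one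
      have := ENNReal.toReal_mono ENNReal.one_ne_top h1
      simpa using this
  have hfun : (fun ω => H (F (Y ω) (X ω))) = fun ω => Hs (V ω) := by
    funext ω
    rw [hF]
    exact hH _ (hVmem ω)
  set T : Measure ℝ := P.map V with hTdef
  haveI hTP : IsProbabilityMeasure T := Measure.isProbabilityMeasure_map hV.aemeasurable
  -- the CDF of V
  have hT : ∀ t : ℝ, t < 1 → T (Iic t) = ENNReal.ofReal (t * c t) := by
    intro t ht1
    rcases lt_or_ge t 0 with ht0 | ht0
    · have hpre : V ⁻¹' (Iic t) = ∅ := by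
        ext ω
        simp only [mem_preimage, mem_Iic, mem_empty_iff_false, iff_false, not_le]
        exact lt_of_lt_of_le ht0 (hVmem ω).1
      have hmul : t * c t ≤ 0 := mul_nonpos_of_nonpos_of_nonneg ht0.le (hc0 t)
      rw [hTdef, Measure.map_apply hV measurableSet_Iic, hpre, measure_empty,
        ENNReal.ofReal_eq_zero.2 hmul]
    · have hset : MeasurableSet {p : (Fin d → ℝ) × ℝ | (κ p.1 (Iic p.2)).toReal ≤ t} :=
        measurableSet_le hFmeas.ennreal_toReal measurable_const
      have hstep1 : T (Iic t)
          = (μX ⊗ₘ κ) {p : (Fin d → ℝ) × ℝ | (κ p.1 (Iic p.2)).toReal ≤ t} := by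
        rw [hTdef, Measure.map_apply hV measurableSet_Iic, ← hjoint,
          Measure.map_apply (hX.prodMk hY) hset]
        rfl
      rw [hstep1, Measure.compProd_apply hset]
      have hinner : ∀ x, κ x (Prod.mk x ⁻¹'
            {p : (Fin d → ℝ) × ℝ | (κ p.1 (Iic p.2)).toReal ≤ t})
          = ({x | p₀ x ≤ t}).indicator (fun _ => ENNReal.ofReal t) x := by
        intro x
        have hpre : Prod.mk x ⁻¹' {p : (Fin d → ℝ) × ℝ | (κ p.1 (Iic p.2)).toReal ≤ t}
            = {y : ℝ | (κ x (Iic y)).toReal ≤ t} := rfl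
        rw [hpre]
        haveI := hν x
        haveI := hνatom x
        have hκIic0 : κ x (Iic 0) = ENNReal.ofReal (p₀ x) := by
          rw [hκ]
          simp only [Measure.coe_add, Measure.coe_smul, Pi.add_apply, Pi.smul_apply,
            smul_eq_mul]
          rw [hν0 x, Measure.dirac_apply' _ measurableSet_Iic]
          simp
        by_cases hx : p₀ x ≤ t
        · rw [indicator_of_mem (show x ∈ {x | p₀ x ≤ t} from hx)]
          exact lemA (κ x) (le_trans (hp₀mem x).1.le hx) ht1 (fun a ha => by
            have hka : κ x {a} = ENNReal.ofReal (p₀ x) * (Measure.dirac (0:ℝ)) {a} := by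
              rw [hκ]
              simp only [Measure.coe_add, Measure.coe_smul, Pi.add_apply, Pi.smul_apply,
                smul_eq_mul]
              rw [show (ν x) {a} = 0 from (hνatom x).measure_singleton a]
              ring
            have ha0 : a = 0 := by
              by_contra h
              apply ha
              rw [hka, Measure.dirac_apply' _ (measurableSet_singleton a)]
              simp [Ne.symm h]
            rw [ha0, hκIic0, ENNReal.toReal_ofReal (hp₀mem x).1.le]
            exact hx)
        · rw [indicator_of_notMem (show x ∉ {x | p₀ x ≤ t} from hx)]
          push_neg at hx
          have hsub : {y : ℝ | (κ x (Iic y)).toReal ≤ t} ⊆ Iio 0 := by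
            intro y hy
            simp only [mem_setOf_eq] at hy
            by_contra h
            simp only [mem_Iio, not_lt] at h
            have h2 : κ x (Iic 0) ≤ κ x (Iic y) := measure_mono (Iic_subset_Iic.2 h)
            have h3 := ENNReal.toReal_mono (measure_ne_top _ _) h2
            rw [hκIic0, ENNReal.toReal_ofReal (hp₀mem x).1.le] at h3
            linarith
          refine measure_mono_null hsub ?_
          rw [hκ]
          simp only [Measure.coe_add, Measure.coe_smul, Pi.add_apply, Pi.smul_apply,
            smul_eq_mul]
          rw [measure_mono_null Iio_subset_Iic_self (hν0 x),
            Measure.dirac_apply' _ measurableSet_Iio]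
          simp
      calc ∫⁻ x, κ x (Prod.mk x ⁻¹'
              {p : (Fin d → ℝ) × ℝ | (κ p.1 (Iic p.2)).toReal ≤ t}) ∂μX
          = ∫⁻ x, ({x | p₀ x ≤ t}).indicator (fun _ => ENNReal.ofReal t) x ∂μX := by
            simp_rw [hinner]
        _ = ENNReal.ofReal t * μX {x | p₀ x ≤ t} := by
            rw [lintegral_indicator_const (show MeasurableSet {x | p₀ x ≤ t} from hp₀ measurableSet_Iic)]
        _ = ENNReal.ofReal t * P {ω | p₀ (X ω) ≤ t} := by
            rw [hμX, Measure.map_apply hX (show MeasurableSet {x | p₀ x ≤ t} from hp₀ measurableSet_Iic)]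
            rfl
        _ = ENNReal.ofReal (t * c t) := by
            rw [ENNReal.ofReal_mul ht0, hcdef]
            congr 1
            exact (ENNReal.ofReal_toReal (measure_ne_top _ _)).symm
  have hT1 : ∀ t : ℝ, 1 ≤ t → T (Iic t) = 1 := fun t ht => by
    have hpre : V ⁻¹' (Iic t) = univ := by
      ext ω
      simp only [mem_preimage, mem_Iic, mem_univ, iff_true]
      exact le_trans (hVmem ω).2 ht
    rw [hTdef, Measure.map_apply hV measurableSet_Iic, hpre, measure_univ]
  -- the left limit of the CDF of V on (0,1]
  have hTIio : ∀ a : ℝ, 0 < a → a ≤ 1 → T (Iio a) = ENNReal.ofReal (a * c a) := by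
    intro a ha0 ha1
    have hiUnion : (⋃ n : ℕ, Iic (a - 1/(n+1))) = Iio a := by
      ext y
      simp only [mem_iUnion, mem_Iic, mem_Iio]
      constructor
      · rintro ⟨n, hn⟩
        have : (0:ℝ) < 1/((n:ℝ)+1) := by positivity
        linarith
      · intro h
        obtain ⟨n, hn⟩ := exists_nat_one_div_lt (sub_pos.2 h)
        exact ⟨n, by linarith⟩
    have hmonoseq : Monotone fun n : ℕ => Iic (a - 1/((n:ℝ)+1)) := by
      intro i j hij
      apply Iic_subset_Iic.2
      have h1 : (1:ℝ)/((j:ℝ)+1) ≤ 1/((i:ℝ)+1) :=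
        one_div_le_one_div_of_le (by positivity)
          (by have := (Nat.cast_le (α:=ℝ)).2 hij; linarith)
      linarith
    have htendT : Tendsto (fun n : ℕ => T (Iic (a - 1/(n+1)))) atTop (𝓝 (T (Iio a))) := by
      have := tendsto_measure_iUnion_atTop (μ := T) hmonoseq
      rwa [hiUnion] at this
    -- identify the limit
    have hma : m {a} = 0 := hp₀X.measure_singleton a
    have hIioIic : m (Iio a) = m (Iic a) :=
      measure_congr (Iio_ae_eq_Iic' hma)
    have htendm : Tendsto (fun n : ℕ => m (Iic (a - 1/(n+1)))) atTop (𝓝 (m (Iic a))) := by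
      have := tendsto_measure_iUnion_atTop (μ := m) hmonoseq
      rw [hiUnion] at this
      rwa [hIioIic] at this
    have htendc : Tendsto (fun n : ℕ => c (a - 1/(n+1))) atTop (𝓝 (c a)) := by
      have h1 : Tendsto (fun n : ℕ => (m (Iic (a - 1/(n+1)))).toReal) atTop
          (𝓝 ((m (Iic a)).toReal)) :=
        (ENNReal.tendsto_toReal (measure_ne_top _ _)).comp htendm
      simp_rw [hm] at h1
      exact h1
    have htendarg : Tendsto (fun n : ℕ => a - 1/((n:ℝ)+1)) atTop (𝓝 a) := by
      have := tendsto_one_div_add_atTop_nhds_zero_nat (𝕜 := ℝ)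
      have h2 := (tendsto_const_nhds (x := a) (f := atTop (α := ℕ))).sub this
      simpa using h2
    have htendprod : Tendsto (fun n : ℕ => ENNReal.ofReal ((a - 1/(n+1)) * c (a - 1/(n+1))))
        atTop (𝓝 (ENNReal.ofReal (a * c a))) :=
      (ENNReal.continuous_ofReal.tendsto _).comp (htendarg.mul htendc)
    have heqseq : ∀ n : ℕ, T (Iic (a - 1/(n+1)))
        = ENNReal.ofReal ((a - 1/(n+1)) * c (a - 1/(n+1))) := fun n => by
      apply hT
      have : (0:ℝ) < 1/((n:ℝ)+1) := by positivity
      linarith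
    rw [show (fun n : ℕ => T (Iic (a - 1/(n+1))))
        = fun n : ℕ => ENNReal.ofReal ((a - 1/(n+1)) * c (a - 1/(n+1))) from
      funext heqseq] at htendT
    exact tendsto_nhds_unique htendT htendprod
  have hTIic' : ∀ a : ℝ, 0 < a → a ≤ 1 → T (Iic a) = ENNReal.ofReal (a * c a) := by
    intro a ha0 ha1
    rcases lt_or_eq_of_le ha1 with h | h
    · exact hT a h
    · rw [h, hT1 1 le_rfl, hcone 1 le_rfl]
      simp
  -- T has no atoms
  have hTatom : ∀ a : ℝ, T {a} = 0 := by
    intro a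
    rcases le_or_gt a 0 with ha | ha
    · refine measure_mono_null (singleton_subset_iff.2 (mem_Iic.2 le_rfl)) ?_
      rw [hT a (lt_of_le_of_lt ha one_pos)]
      exact ENNReal.ofReal_eq_zero.2 (mul_nonpos_of_nonpos_of_nonneg ha (hc0 a))
    · rcases le_or_gt a 1 with ha1 | ha1
      · have hsplit : T (Iic a) = T (Iio a) + T {a} := by
          rw [← Iio_union_right]
          exact measure_union (by simp) (measurableSet_singleton a)
        rw [hTIic' a ha ha1, hTIio a ha ha1] at hsplit
        have h0 : ENNReal.ofReal (a * c a) + T {a} = ENNReal.ofReal (a * c a) + 0 := by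
          rw [add_zero]; exact hsplit.symm
        exact (ENNReal.add_right_inj ENNReal.ofReal_ne_top).1 h0
      · have hIoi : T (Ioi 1) = 0 := by
          have hu : T (Iic 1) + T (Ioi 1) = 1 := by
            rw [← measure_union (Iic_disjoint_Ioi le_rfl) measurableSet_Ioi,
              Iic_union_Ioi, measure_univ]
          rw [hT1 1 le_rfl] at hu
          nth_rewrite 2 [show (1:ℝ≥0∞) = 1 + 0 by rw [add_zero]] at hu
          exact (ENNReal.add_right_inj ENNReal.one_ne_top).1 hu
        exact measure_mono_null (singleton_subset_iff.2 ha1) hIoi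
  -- now compute the law of Hs ∘ V
  rw [hfun]
  haveI : IsFiniteMeasure (P.map fun ω => Hs (V ω)) := by
    haveI : IsProbabilityMeasure (P.map fun ω => Hs (V ω)) :=
      Measure.isProbabilityMeasure_map ((hHsmeas.comp hV).aemeasurable)
    infer_instance
  refine Measure.ext_of_Iic _ _ (fun u => ?_)
  rw [Measure.map_apply (show Measurable fun ω => Hs (V ω) from hHsmeas.comp hV)
    measurableSet_Iic, Measure.restrict_apply measurableSet_Iic]
  rcases lt_or_ge u 0 with hu | hu0
  · have h1 : (fun ω => Hs (V ω)) ⁻¹' (Iic u) = ∅ := by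
      ext ω
      simp only [mem_preimage, mem_Iic, mem_empty_iff_false, iff_false, not_le]
      exact lt_of_lt_of_le hu (mul_nonneg (hVmem ω).1 (hc0 _))
    have h2 : Iic u ∩ Icc (0:ℝ) 1 = ∅ := by
      ext z
      simp only [mem_inter_iff, mem_Iic, mem_Icc, mem_empty_iff_false, iff_false]
      rintro ⟨h3, h4, h5⟩
      linarith
    rw [h1, h2, measure_empty, measure_empty]
  rcases lt_or_ge u 1 with hu1 | hu1
  · -- main case
    have hseteq : {s : ℝ | Hs s ≤ u} = {s : ℝ | (T (Iic s)).toReal ≤ u} := by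
      ext sx
      simp only [mem_setOf_eq]
      rcases lt_or_ge sx 0 with hsx | hsx
      · have hL : Hs sx ≤ u :=
          le_trans (mul_nonpos_of_nonpos_of_nonneg hsx.le (hc0 sx)) hu0
        have hR : (T (Iic sx)).toReal ≤ u := by
          rw [hT sx (lt_trans hsx one_pos)]
          rw [ENNReal.ofReal_eq_zero.2 (mul_nonpos_of_nonpos_of_nonneg hsx.le (hc0 sx))]
          simpa using hu0
        simp [hL, hR]
      · rcases lt_or_ge sx 1 with hsx1 | hsx1
        · rw [hT sx hsx1, ENNReal.toReal_ofReal (mul_nonneg hsx (hc0 sx))]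
        · have hL : ¬ (Hs sx ≤ u) := by
            rw [hHsdef]
            simp only [not_le]
            calc u < 1 := hu1
              _ ≤ sx := hsx1
              _ = sx * c sx := by rw [hcone sx hsx1, mul_one]
          have hR : ¬ ((T (Iic sx)).toReal ≤ u) := by
            rw [hT1 sx hsx1]
            simpa using hu1
          simp [hL, hR]
    have hpre : (fun ω => Hs (V ω)) ⁻¹' (Iic u) = V ⁻¹' {s : ℝ | Hs s ≤ u} := rfl
    have hsetm : MeasurableSet {s : ℝ | (T (Iic s)).toReal ≤ u} := by
      rw [← hseteq]
      exact hHsmeas measurableSet_Iic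
    have hmain : P ((fun ω => Hs (V ω)) ⁻¹' (Iic u)) = ENNReal.ofReal u := by
      have h3 : (fun ω => Hs (V ω)) ⁻¹' (Iic u)
          = V ⁻¹' {s : ℝ | (T (Iic s)).toReal ≤ u} := by
        rw [hpre, hseteq]
      rw [h3, ← Measure.map_apply hV hsetm]
      exact lemA T hu0 hu1 (fun a ha => absurd (hTatom a) ha)
    rw [hmain]
    have h2 : Iic u ∩ Icc (0:ℝ) 1 = Icc 0 u := by
      ext z
      simp only [mem_inter_iff, mem_Iic, mem_Icc]
      constructor
      · rintro ⟨h3, h4, h5⟩; exact ⟨h4, h3⟩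
      · rintro ⟨h3, h4⟩; exact ⟨h4, h3, by linarith⟩
    rw [h2, Real.volume_Icc, sub_zero]
  · have h1 : (fun ω => Hs (V ω)) ⁻¹' (Iic u) = univ := by
      ext ω
      simp only [mem_preimage, mem_Iic, mem_univ, iff_true]
      calc Hs (V ω) = V ω * c (V ω) := rfl
        _ ≤ 1 := mul_le_one₀ (hVmem ω).2 (hc0 _) (hc1 _)
        _ ≤ u := hu1
    have h2 : Iic u ∩ Icc (0:ℝ) 1 = Icc 0 1 :=
      inter_eq_self_of_subset_right (fun z hz => le_trans hz.2 hu1)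
    rw [h1, h2, measure_univ, Real.volume_Icc]
    simp

end Stmt5Aux
end

section
/- Let (X₁,Y₁), (X₂,Y₂), … be i.i.d. with the joint law μ_X ⊗ κ, and let Ĥ_n be the empirical estimator built from X₁,…,X_n. Then almost surely, max_{1 ≤ i ≤ n} |Ĥ_n(F(Y_i|X_i)) − H(F(Y_i|X_i))| → 0 as n → ∞; i.e., with the true model known, the proposed residuals converge uniformly to the uniformly distributed model errors. -/
open MeasureTheory ProbabilityTheory Set Filter
open scoped ENNReal ProbabilityTheory
open scoped Topology

lemma slln_ind {Ω E : Type*} [MeasurableSpace Ω] [MeasurableSpace E]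
    (P : Measure Ω) [IsProbabilityMeasure P] (W : ℕ → Ω → E)
    (hW : ∀ i, Measurable (W i))
    (hindep : iIndepFun W P)
    (m : Measure E) (hm : ∀ i, P.map (W i) = m)
    {S : Set E} (hS : MeasurableSet S) :
    ∀ᵐ ω ∂P, Tendsto
      (fun n => (∑ j ∈ Finset.range n, S.indicator (fun _ => (1:ℝ)) (W j ω)) / n)
      atTop (𝓝 (m S).toReal) := by
  classical
  set g : E → ℝ := S.indicator (fun _ => (1:ℝ)) with hg
  have hgmeas : Measurable g := measurable_const.indicator hS
  set Z : ℕ → Ω → ℝ := fun i ω => g (W i ω) with hZ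
  have hZeq : ∀ i, Z i = (W i ⁻¹' S).indicator (fun _ => (1:ℝ)) := by
    intro i; ext ω; by_cases h : W i ω ∈ S <;>
      simp [hZ, hg, Set.indicator_apply, h]
  have hint : Integrable (Z 0) P := by
    rw [hZeq 0]
    exact (integrable_const (1:ℝ)).indicator ((hW 0) hS)
  have hindep' : Pairwise (Function.onFun (IndepFun · · P) Z) := by
    intro i j hij
    exact (hindep.indepFun hij).comp hgmeas hgmeas
  have hident : ∀ i, IdentDistrib (Z i) (Z 0) P P := by
    intro i
    have h0 : IdentDistrib (W i) (W 0) P P :=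
      ⟨(hW i).aemeasurable, (hW 0).aemeasurable, by rw [hm i, hm 0]⟩
    exact h0.comp hgmeas
  have hexp : P[Z 0] = (m S).toReal := by
    rw [hZeq 0, integral_indicator_const (1:ℝ) ((hW 0) hS)]
    rw [← hm 0, Measure.map_apply (hW 0) hS]
    simp [smul_eq_mul, measureReal_def]
  have h := strong_law_ae_real Z hint hindep' hident
  rw [hexp] at h
  exact h

lemma unif_bound (G Gm Fn Fm : ℝ → ℝ) (k : ℕ) (hk : 1 ≤ k) (t : ℕ → ℝ) (ε' : ℝ)
    (hε' : 0 ≤ ε')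
    (hGmono : Monotone G) (hG1 : ∀ s, G s ≤ 1)
    (hFmono : Monotone Fn) (hF1 : ∀ s, Fn s ≤ 1)
    (ht0 : ∀ s, s < t 0 → G s = 0 ∧ Fn s = 0)
    (hGt : ∀ j, j ≤ k → (j:ℝ)/k ≤ G (t j))
    (hGmt : ∀ j, j ≤ k → Gm (t j) ≤ (j:ℝ)/k)
    (hGleGm : ∀ s u, s < u → G s ≤ Gm u)
    (hFleFm : ∀ s u, s < u → Fn s ≤ Fm u)
    (hFG : ∀ j, j ≤ k → |Fn (t j) - G (t j)| ≤ ε')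
    (hFmGm : ∀ j, j ≤ k → |Fm (t j) - Gm (t j)| ≤ ε') :
    ∀ s, |Fn s - G s| ≤ ε' + 1/k := by
  classical
  have hkpos : (0:ℝ) < k := by exact_mod_cast hk
  have hinv : (0:ℝ) ≤ 1/k := by positivity
  intro s
  rcases lt_or_ge s (t 0) with h0 | h0
  · obtain ⟨hG0, hF0⟩ := ht0 s h0
    rw [hG0, hF0]
    simpa using add_nonneg hε' hinv
  rcases lt_or_ge s (t k) with hks | hks
  · set Pp : ℕ → Prop := fun j => t j ≤ s with hPp
    have hP0 : Pp 0 := h0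
    set j := Nat.findGreatest Pp k with hj
    have hjk : j ≤ k := Nat.findGreatest_le k
    have hPj : Pp j := Nat.findGreatest_spec (Nat.zero_le k) hP0
    have hjlt : j < k := by
      rcases lt_or_eq_of_le hjk with h | h
      · exact h
      · exact absurd hPj (by rw [h]; exact not_le.mpr hks)
    have hnotP : ¬ Pp (j+1) := Nat.findGreatest_is_greatest (P := Pp) (n := k) (by omega) (by omega)
    have hsj1 : s < t (j+1) := not_le.mp hnotP
    have h1 := hFG j hjk
    have h2 := hFmGm (j+1) (by omega)
    have h3 := hGt j hjk
    have h4 := hGmt (j+1) (by omega)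
    have hstep : ((j:ℝ)+1)/k = (j:ℝ)/k + 1/k := by field_simp
    push_cast at h4 h2
    have e1 : Fn s ≤ Fm (t (j+1)) := hFleFm s _ hsj1
    have e2 : G (t j) ≤ G s := hGmono hPj
    have e3 : Fn (t j) ≤ Fn s := hFmono hPj
    have e4 : G s ≤ Gm (t (j+1)) := hGleGm s _ hsj1
    rw [abs_le] at h1 h2 ⊢
    constructor <;> linarith [h1.1, h1.2, h2.1, h2.2]
  · have h3 := hGt k le_rfl
    have hkk : (k:ℝ)/k = 1 := div_self (ne_of_gt hkpos)
    rw [hkk] at h3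
    have e2 : G (t k) ≤ G s := hGmono hks
    have e3 : Fn (t k) ≤ Fn s := hFmono hks
    have h1 := hFG k le_rfl
    have hGs1 : G s = 1 := le_antisymm (hG1 s) (le_trans h3 e2)
    rw [abs_le] at h1 ⊢
    constructor <;> linarith [hF1 s, hG1 (t k), h1.1, h1.2]

/-- Semicontinuous regression setup with i.i.d. observations
`(X₁,Y₁), (X₂,Y₂), …` with joint law `μ_X ⊗ κ`, where
`κ(x) = p₀(x)·δ₀ + (1-p₀(x))·ν_x`, `F(y|x) = κ(x)((-∞,y])`,
`H(s) = s·Pr(p₀(X) ≤ s)` and `Ĥ_n(s) = (s/n)·Σ_{j=1}^n 1{p₀(X_j) ≤ s}`.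
Then almost surely `max_{1 ≤ i ≤ n} |Ĥ_n(F(Y_i|X_i)) − H(F(Y_i|X_i))| → 0`
as `n → ∞`. -/
theorem stmt8 {d : ℕ} {Ω : Type*} [MeasurableSpace Ω] (P : Measure Ω)
    [IsProbabilityMeasure P]
    (μX : Measure (Fin d → ℝ)) [IsProbabilityMeasure μX]
    (p₀ : (Fin d → ℝ) → ℝ) (hp₀ : Measurable p₀)
    (hp₀mem : ∀ x, p₀ x ∈ Set.Ioo (0 : ℝ) 1)
    (ν : (Fin d → ℝ) → Measure ℝ) (hν : ∀ x, IsProbabilityMeasure (ν x))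
    (hν0 : ∀ x, ν x (Set.Iic 0) = 0) (hνatom : ∀ x, NoAtoms (ν x))
    (κ : Kernel (Fin d → ℝ) ℝ) [IsMarkovKernel κ]
    (hκ : ∀ x, κ x = ENNReal.ofReal (p₀ x) • Measure.dirac 0
        + ENNReal.ofReal (1 - p₀ x) • ν x)
    (F : ℝ → (Fin d → ℝ) → ℝ) (hF : ∀ y x, F y x = (κ x (Set.Iic y)).toReal)
    (XY : ℕ → Ω → (Fin d → ℝ) × ℝ) (hXYmeas : ∀ i, Measurable (XY i))
    (hindep : iIndepFun XY P)
    (hident : ∀ i, P.map (XY i) = μX ⊗ₘ κ)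
    (H : ℝ → ℝ) (hH : ∀ s ∈ Set.Icc (0 : ℝ) 1,
      H s = s * (μX {x | p₀ x ≤ s}).toReal)
    (Hhat : ℕ → Ω → ℝ → ℝ)
    (hHhat : ∀ n ω s, Hhat n ω s
      = (s / n) * ∑ j ∈ Finset.range n, (if p₀ ((XY j ω).1) ≤ s then (1 : ℝ) else 0)) :
    ∀ᵐ ω ∂P, Tendsto
      (fun n => ⨆ i : Fin n,
        |Hhat n ω (F ((XY i ω).2) ((XY i ω).1)) - H (F ((XY i ω).2) ((XY i ω).1))|)
      atTop (nhds 0) := by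
  classical
  have hμfin : ∀ S : Set (Fin d → ℝ), μX S ≠ ⊤ := fun S => measure_ne_top μX S
  set G : ℝ → ℝ := fun s => (μX {x | p₀ x ≤ s}).toReal with hGdef
  set Gm : ℝ → ℝ := fun s => (μX {x | p₀ x < s}).toReal with hGmdef
  have hGapp : ∀ u : ℝ, G u = (μX {x | p₀ x ≤ u}).toReal := fun u => by
    simp only [hGdef]
  have hGmapp : ∀ u : ℝ, Gm u = (μX {x | p₀ x < u}).toReal := fun u => by
    simp only [hGmdef]
  have hGmono : Monotone G := fun a b hab =>
    ENNReal.toReal_mono (hμfin _) (measure_mono fun x hx => le_trans hx hab)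
  have hG1 : ∀ s, G s ≤ 1 := by
    intro s
    have h := prob_le_one (μ := μX) (s := {x | p₀ x ≤ s})
    simpa [hGapp] using ENNReal.toReal_mono (by simp) h
  have hGleGm : ∀ s u : ℝ, s < u → G s ≤ Gm u := fun s u hsu =>
    ENNReal.toReal_mono (hμfin _) (measure_mono fun x hx => lt_of_le_of_lt hx hsu)
  have hGneg : ∀ s : ℝ, s ≤ 0 → G s = 0 := by
    intro s hs
    have h : {x | p₀ x ≤ s} = ∅ := by
      ext x
      simp only [Set.mem_setOf_eq, Set.mem_empty_iff_false, iff_false, not_le]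
      exact lt_of_le_of_lt hs (hp₀mem x).1
    simp [hGapp, h]
  have hGmneg : ∀ s : ℝ, s ≤ 0 → Gm s = 0 := by
    intro s hs
    have h : {x | p₀ x < s} = ∅ := by
      ext x
      simp only [Set.mem_setOf_eq, Set.mem_empty_iff_false, iff_false, not_lt]
      exact le_trans hs (le_of_lt (hp₀mem x).1)
    simp [hGmapp, h]
  have hGone : G 1 = 1 := by
    have h : {x | p₀ x ≤ (1:ℝ)} = Set.univ := by
      ext x; simp [le_of_lt (hp₀mem x).2]
    simp [hGapp, h]
  have hqaux : ∀ c : ℝ, 0 < c → c ≤ 1 →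
      ({s : ℝ | c ≤ G s}).Nonempty ∧ BddBelow {s : ℝ | c ≤ G s} := by
    intro c hc hc1
    have h1 : (1:ℝ) ∈ {s : ℝ | c ≤ G s} := by
      simp only [Set.mem_setOf_eq, hGone]; exact hc1
    refine ⟨⟨1, h1⟩, ⟨0, fun s hs => ?_⟩⟩
    by_contra h
    push_neg at h
    have h0 := hGneg s (le_of_lt h)
    simp only [Set.mem_setOf_eq, h0] at hs
    linarith
  have hGq : ∀ c : ℝ, 0 < c → c ≤ 1 → c ≤ G (sInf {s : ℝ | c ≤ G s}) := by
    intro c hc hc1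
    obtain ⟨hne, hbdd⟩ := hqaux c hc hc1
    set q := sInf {s : ℝ | c ≤ G s} with hq
    have key : ∀ u, q < u → c ≤ G u := by
      intro u hu
      obtain ⟨x, hx, hxu⟩ := (csInf_lt_iff hbdd hne).1 hu
      exact le_trans hx (hGmono (le_of_lt hxu))
    have hseq : {x | p₀ x ≤ q} = ⋂ n : ℕ, {x | p₀ x ≤ q + 1/((n:ℝ)+1)} := by
      ext x
      simp only [Set.mem_setOf_eq, Set.mem_iInter]
      constructor
      · intro h n
        have hp : (0:ℝ) < 1/((n:ℝ)+1) := by positivity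
        linarith
      · intro h
        by_contra hlt
        push_neg at hlt
        obtain ⟨n, hn⟩ := exists_nat_one_div_lt (sub_pos.mpr hlt)
        have := h n
        linarith
    have hanti : Antitone (fun n : ℕ => {x | p₀ x ≤ q + 1/((n:ℝ)+1)}) := by
      intro a b hab x hx
      simp only [Set.mem_setOf_eq] at hx ⊢
      have hba : 1/((b:ℝ)+1) ≤ 1/((a:ℝ)+1) := by
        apply one_div_le_one_div_of_le (by positivity)
        have : (a:ℝ) ≤ b := by exact_mod_cast hab
        linarith
      linarith
    have hcont := Directed.measure_iInter (μ := μX)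
      (fun n : ℕ => (measurableSet_le hp₀ measurable_const).nullMeasurableSet)
      hanti.directed_ge ⟨0, hμfin _⟩
    have hle : ENNReal.ofReal c ≤ μX {x | p₀ x ≤ q} := by
      rw [hseq, hcont]
      refine le_iInf fun n => ?_
      refine ENNReal.ofReal_le_of_le_toReal ?_
      have hp : (0:ℝ) < 1/((n:ℝ)+1) := by positivity
      have hk := key (q + 1/((n:ℝ)+1)) (by linarith)
      rw [hGapp] at hk
      exact hk
    have h2 := ENNReal.toReal_mono (hμfin _) hle
    rw [ENNReal.toReal_ofReal (le_of_lt hc)] at h2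
    rw [hGapp]
    exact h2
  have hGmq : ∀ c : ℝ, 0 < c → c ≤ 1 → Gm (sInf {s : ℝ | c ≤ G s}) ≤ c := by
    intro c hc hc1
    obtain ⟨hne, hbdd⟩ := hqaux c hc hc1
    set q := sInf {s : ℝ | c ≤ G s} with hq
    have key : ∀ u, u < q → G u < c := by
      intro u hu
      by_contra h
      push_neg at h
      exact absurd (csInf_le hbdd h) (not_le.mpr hu)
    have hseq : {x | p₀ x < q} = ⋃ n : ℕ, {x | p₀ x ≤ q - 1/((n:ℝ)+1)} := by
      ext x
      simp only [Set.mem_setOf_eq, Set.mem_iUnion]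
      constructor
      · intro h
        obtain ⟨n, hn⟩ := exists_nat_one_div_lt (sub_pos.mpr h)
        exact ⟨n, by linarith⟩
      · rintro ⟨n, hn⟩
        have hp : (0:ℝ) < 1/((n:ℝ)+1) := by positivity
        linarith
    have hmon : Monotone (fun n : ℕ => {x | p₀ x ≤ q - 1/((n:ℝ)+1)}) := by
      intro a b hab x hx
      simp only [Set.mem_setOf_eq] at hx ⊢
      have hba : 1/((b:ℝ)+1) ≤ 1/((a:ℝ)+1) := by
        apply one_div_le_one_div_of_le (by positivity)
        have : (a:ℝ) ≤ b := by exact_mod_cast hab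
        linarith
      linarith
    have hcont := Directed.measure_iUnion (μ := μX) hmon.directed_le
    have hle : μX {x | p₀ x < q} ≤ ENNReal.ofReal c := by
      rw [hseq, hcont]
      refine iSup_le fun n => ?_
      have hp : (0:ℝ) < 1/((n:ℝ)+1) := by positivity
      have hlt := key (q - 1/((n:ℝ)+1)) (by linarith)
      rw [hGapp] at hlt
      exact le_of_lt ((ENNReal.lt_ofReal_iff_toReal_lt (hμfin _)).2 hlt)
    have h2 := ENNReal.toReal_mono ENNReal.ofReal_ne_top hle
    rw [ENNReal.toReal_ofReal (le_of_lt hc)] at h2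
    rw [hGmapp]
    exact h2
  set tpt : ℕ → ℕ → ℝ := fun k j =>
    if j = 0 then (-1:ℝ) else sInf {s : ℝ | ((j:ℝ)/(k:ℝ)) ≤ G s} with htpt
  -- SLLN at each fixed point
  have hAs : ∀ s : ℝ, ∀ᵐ ω ∂P, Tendsto
      (fun n : ℕ => (∑ j ∈ Finset.range n,
        if p₀ ((XY j ω).1) ≤ s then (1:ℝ) else 0) / n)
      atTop (𝓝 (G s)) := by
    intro s
    have hSm : MeasurableSet {z : (Fin d → ℝ) × ℝ | p₀ z.1 ≤ s} :=
      measurableSet_le (hp₀.comp measurable_fst) measurable_const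
    have h := slln_ind P XY hXYmeas hindep (μX ⊗ₘ κ) hident hSm
    have hms : ((μX ⊗ₘ κ) {z : (Fin d → ℝ) × ℝ | p₀ z.1 ≤ s}).toReal = G s := by
      rw [hGapp]
      congr 1
      have h1 : {z : (Fin d → ℝ) × ℝ | p₀ z.1 ≤ s} = Prod.fst ⁻¹' {x | p₀ x ≤ s} := rfl
      rw [h1, ← Measure.fst_apply (measurableSet_le hp₀ measurable_const),
        Measure.fst_compProd]
    rw [hms] at h
    filter_upwards [h] with ω hω
    have heq : ∀ n : ℕ, (∑ j ∈ Finset.range n, if p₀ ((XY j ω).1) ≤ s then (1:ℝ) else 0)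
        = ∑ j ∈ Finset.range n,
          ({z : (Fin d → ℝ) × ℝ | p₀ z.1 ≤ s}).indicator (fun _ => (1:ℝ)) (XY j ω) := by
      intro n
      refine Finset.sum_congr rfl fun j _ => ?_
      by_cases hc : p₀ ((XY j ω).1) ≤ s <;> simp [Set.indicator_apply, hc]
    simpa only [heq] using hω
  have hBs : ∀ s : ℝ, ∀ᵐ ω ∂P, Tendsto
      (fun n : ℕ => (∑ j ∈ Finset.range n,
        if p₀ ((XY j ω).1) < s then (1:ℝ) else 0) / n)
      atTop (𝓝 (Gm s)) := by
    intro s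
    have hSm : MeasurableSet {z : (Fin d → ℝ) × ℝ | p₀ z.1 < s} :=
      measurableSet_lt (hp₀.comp measurable_fst) measurable_const
    have h := slln_ind P XY hXYmeas hindep (μX ⊗ₘ κ) hident hSm
    have hms : ((μX ⊗ₘ κ) {z : (Fin d → ℝ) × ℝ | p₀ z.1 < s}).toReal = Gm s := by
      rw [hGmapp]
      congr 1
      have h1 : {z : (Fin d → ℝ) × ℝ | p₀ z.1 < s} = Prod.fst ⁻¹' {x | p₀ x < s} := rfl
      rw [h1, ← Measure.fst_apply (measurableSet_lt hp₀ measurable_const),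
        Measure.fst_compProd]
    rw [hms] at h
    filter_upwards [h] with ω hω
    have heq : ∀ n : ℕ, (∑ j ∈ Finset.range n, if p₀ ((XY j ω).1) < s then (1:ℝ) else 0)
        = ∑ j ∈ Finset.range n,
          ({z : (Fin d → ℝ) × ℝ | p₀ z.1 < s}).indicator (fun _ => (1:ℝ)) (XY j ω) := by
      intro n
      refine Finset.sum_congr rfl fun j _ => ?_
      by_cases hc : p₀ ((XY j ω).1) < s <;> simp [Set.indicator_apply, hc]
    simpa only [heq] using hω
  have hall : ∀ᵐ ω ∂P, ∀ k : ℕ, ∀ j : ℕ,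
      Tendsto (fun n : ℕ => (∑ i ∈ Finset.range n,
          if p₀ ((XY i ω).1) ≤ tpt k j then (1:ℝ) else 0) / n) atTop (𝓝 (G (tpt k j))) ∧
      Tendsto (fun n : ℕ => (∑ i ∈ Finset.range n,
          if p₀ ((XY i ω).1) < tpt k j then (1:ℝ) else 0) / n) atTop (𝓝 (Gm (tpt k j))) := by
    rw [ae_all_iff]
    intro k
    rw [ae_all_iff]
    intro j
    exact (hAs _).and (hBs _)
  filter_upwards [hall] with ω hω
  rw [Metric.tendsto_atTop]
  intro ε hε
  obtain ⟨k, hk2⟩ := exists_nat_gt (2/ε)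
  have h2ε : (0:ℝ) < 2/ε := by positivity
  have hkR : (0:ℝ) < k := lt_trans h2ε hk2
  have hk1 : 1 ≤ k := Nat.cast_pos.mp hkR
  have hinvk : 1/(k:ℝ) < ε/2 := by
    rw [div_lt_div_iff₀ hkR two_pos]
    have h2 : 2 < (k:ℝ) * ε := by
      rw [div_lt_iff₀ hε] at hk2
      linarith
    linarith
  set t : ℕ → ℝ := tpt k with htdef
  have hε4 : (0:ℝ) < ε/4 := by positivity
  have hev : ∀ᶠ n : ℕ in atTop, 1 ≤ n ∧ ∀ j ∈ Finset.range (k+1),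
      |(∑ i ∈ Finset.range n, if p₀ ((XY i ω).1) ≤ t j then (1:ℝ) else 0) / n - G (t j)| ≤ ε/4
      ∧ |(∑ i ∈ Finset.range n, if p₀ ((XY i ω).1) < t j then (1:ℝ) else 0) / n - Gm (t j)| ≤ ε/4 := by
    refine (eventually_ge_atTop 1).and ((eventually_all_finset _).2 fun j _ => ?_)
    obtain ⟨N1, hN1⟩ := Metric.tendsto_atTop.1 (hω k j).1 (ε/4) hε4
    obtain ⟨N2, hN2⟩ := Metric.tendsto_atTop.1 (hω k j).2 (ε/4) hε4
    refine eventually_atTop.2 ⟨max N1 N2, fun n hn => ⟨?_, ?_⟩⟩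
    · have h1 := hN1 n (le_trans (le_max_left _ _) hn)
      rw [Real.dist_eq] at h1
      exact h1.le
    · have h2 := hN2 n (le_trans (le_max_right _ _) hn)
      rw [Real.dist_eq] at h2
      exact h2.le
  obtain ⟨N, hN⟩ := eventually_atTop.1 hev
  refine ⟨max N 1, fun n hn => ?_⟩
  obtain ⟨hn1, hskel⟩ := hN n (le_trans (le_max_left _ _) hn)
  have hnR : (0:ℝ) < n := by exact_mod_cast hn1
  -- uniform bound via unif_bound
  have htprop : ∀ j : ℕ, 1 ≤ j → j ≤ k →
      ((j:ℝ)/(k:ℝ)) ≤ G (t j) ∧ Gm (t j) ≤ (j:ℝ)/(k:ℝ) := by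
    intro j hj1 hjk
    have hc : (0:ℝ) < (j:ℝ)/(k:ℝ) := by
      apply div_pos _ hkR
      exact_mod_cast hj1
    have hc1 : (j:ℝ)/(k:ℝ) ≤ 1 := by
      rw [div_le_one hkR]
      exact_mod_cast hjk
    have hj0 : j ≠ 0 := by omega
    have htj : t j = sInf {s : ℝ | ((j:ℝ)/(k:ℝ)) ≤ G s} := by
      simp only [htdef, htpt, hj0, if_false]
    rw [htj]
    exact ⟨hGq _ hc hc1, hGmq _ hc hc1⟩
  have ht0val : t 0 = -1 := by simp [htdef, htpt]
  have hu : ∀ s : ℝ, |(fun s : ℝ => (∑ i ∈ Finset.range n,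
      if p₀ ((XY i ω).1) ≤ s then (1:ℝ) else 0) / n) s - G s| ≤ ε/4 + 1/(k:ℝ) := by
    apply unif_bound G Gm _
      (fun s : ℝ => (∑ i ∈ Finset.range n,
        if p₀ ((XY i ω).1) < s then (1:ℝ) else 0) / n)
      k hk1 t (ε/4) (le_of_lt hε4) hGmono hG1
    · -- Monotone Fn
      intro a b hab
      apply div_le_div_of_nonneg_right ?_ hnR.le
      refine Finset.sum_le_sum fun l _ => ?_
      split_ifs with h1 h2 h3
      · norm_num
      · exact absurd (le_trans h1 hab) h2
      · norm_num
      · norm_num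
    · -- Fn ≤ 1
      intro s
      rw [div_le_one hnR]
      calc (∑ l ∈ Finset.range n, if p₀ ((XY l ω).1) ≤ s then (1:ℝ) else 0)
          ≤ ∑ _l ∈ Finset.range n, (1:ℝ) :=
            Finset.sum_le_sum fun l _ => by split_ifs <;> norm_num
        _ = n := by simp
    · -- below t 0
      intro s hs
      rw [ht0val] at hs
      constructor
      · exact hGneg s (by linarith)
      · have hz : ∀ l ∈ Finset.range n,
            (if p₀ ((XY l ω).1) ≤ s then (1:ℝ) else 0) = 0 := by
          intro l _
          have hpl := (hp₀mem ((XY l ω).1)).1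
          rw [if_neg (by linarith)]
        rw [Finset.sum_eq_zero hz, zero_div]
    · -- hGt
      intro j hjk
      rcases Nat.eq_zero_or_pos j with rfl | hj1
      · have h0 := hGneg (-1:ℝ) (by norm_num)
        simp [ht0val, h0]
      · exact (htprop j hj1 hjk).1
    · -- hGmt
      intro j hjk
      rcases Nat.eq_zero_or_pos j with rfl | hj1
      · have h0 := hGmneg (-1:ℝ) (by norm_num)
        simp [ht0val, h0]
      · exact (htprop j hj1 hjk).2
    · exact hGleGm
    · -- hFleFm
      intro s u hsu
      apply div_le_div_of_nonneg_right ?_ hnR.le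
      refine Finset.sum_le_sum fun l _ => ?_
      split_ifs with h1 h2 h3
      · norm_num
      · exact absurd (lt_of_le_of_lt h1 hsu) h2
      · norm_num
      · norm_num
    · -- hFG
      intro j hjk
      exact (hskel j (Finset.mem_range.2 (by omega))).1
    · -- hFmGm
      intro j hjk
      exact (hskel j (Finset.mem_range.2 (by omega))).2
  have hterm : ∀ i : Fin n,
      |Hhat n ω (F ((XY i ω).2) ((XY i ω).1)) - H (F ((XY i ω).2) ((XY i ω).1))|
        ≤ ε/4 + 1/(k:ℝ) := by
    intro i
    set s : ℝ := F ((XY i ω).2) ((XY i ω).1) with hsdef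
    have hs0 : 0 ≤ s := by rw [hsdef, hF]; exact ENNReal.toReal_nonneg
    have hs1 : s ≤ 1 := by
      rw [hsdef, hF]
      have hpm : IsProbabilityMeasure (κ ((XY i ω).1)) :=
        IsMarkovKernel.isProbabilityMeasure _
      have h := prob_le_one (μ := κ ((XY i ω).1)) (s := Set.Iic ((XY i ω).2))
      simpa using ENNReal.toReal_mono (by simp) h
    have hdiff : Hhat n ω s - H s
        = s * ((∑ l ∈ Finset.range n, if p₀ ((XY l ω).1) ≤ s then (1:ℝ) else 0) / n
            - G s) := by
      rw [hHhat, hH s (Set.mem_Icc.mpr ⟨hs0, hs1⟩), hGapp]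
      ring
    rw [hdiff, abs_mul]
    have hb : |(∑ l ∈ Finset.range n, if p₀ ((XY l ω).1) ≤ s then (1:ℝ) else 0) / n
        - G s| ≤ ε/4 + 1/(k:ℝ) := hu s
    have habs : |s| ≤ 1 := by rw [abs_of_nonneg hs0]; exact hs1
    exact le_trans (mul_le_of_le_one_left (abs_nonneg _) habs) hb
  rw [Real.dist_eq, sub_zero]
  have hlt : ε/4 + 1/(k:ℝ) < ε := by linarith
  have hne : Nonempty (Fin n) := ⟨⟨0, by omega⟩⟩
  have hbdd : BddAbove (Set.range fun i : Fin n =>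
      |Hhat n ω (F ((XY i ω).2) ((XY i ω).1)) - H (F ((XY i ω).2) ((XY i ω).1))|) :=
    (Set.finite_range _).bddAbove
  have hVle := ciSup_le hterm
  have hV0 : (0:ℝ) ≤ ⨆ i : Fin n,
      |Hhat n ω (F ((XY i ω).2) ((XY i ω).1)) - H (F ((XY i ω).2) ((XY i ω).1))| :=
    le_trans (abs_nonneg _) (le_ciSup hbdd (⟨0, by omega⟩ : Fin n))
  rw [abs_of_nonneg hV0]
  exact lt_of_le_of_lt hVle hlt
end

section
/- Let Z and W be real-valued random variables on the same probability space with |Z − W| ≤ δ almost surely, and suppose the laws of Z and of W each have a Lebesgue density bounded by M. Then for all a, b ∈ [0,1], E|a·1{Z ≤ a} − b·1{W ≤ b}| ≤ 2Mδ + (1 + M)·|a − b|. (This is the core estimate in the proof of Lemma A.2.) -/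
open MeasureTheory Set
open scoped ENNReal

lemma stmt11_interval_bound {Ω : Type*} [MeasurableSpace Ω] (P : Measure Ω)
    (W : Ω → ℝ) (hW : Measurable W) (M : ℝ) (hM : 0 ≤ M)
    (f : ℝ → ℝ≥0∞)
    (hlaw : P.map W = volume.withDensity f)
    (hbound : ∀ᵐ t ∂(volume : Measure ℝ), f t ≤ ENNReal.ofReal M)
    (c d : ℝ) :
    P {ω | c < W ω ∧ W ω ≤ d} ≤ ENNReal.ofReal (M * (d - c)) := by
  have hset : {ω | c < W ω ∧ W ω ≤ d} = W ⁻¹' (Ioc c d) := rfl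
  rw [hset, ← Measure.map_apply hW measurableSet_Ioc, hlaw,
    withDensity_apply _ measurableSet_Ioc]
  calc ∫⁻ t in Ioc c d, f t ∂volume
      ≤ ∫⁻ _ in Ioc c d, ENNReal.ofReal M ∂volume :=
        lintegral_mono_ae (ae_restrict_of_ae hbound)
    _ = ENNReal.ofReal M * volume (Ioc c d) := by rw [setLIntegral_const]
    _ = ENNReal.ofReal (M * (d - c)) := by
        rw [Real.volume_Ioc, ← ENNReal.ofReal_mul hM]

/-- If `|Z − W| ≤ δ` almost surely and the laws of `Z` and `W` each have a
Lebesgue density bounded by `M`, then for all `a, b ∈ [0,1]`,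
`E|a·1{Z ≤ a} − b·1{W ≤ b}| ≤ 2Mδ + (1 + M)·|a − b|`. -/
theorem stmt11 {Ω : Type*} [MeasurableSpace Ω] (P : Measure Ω) [IsProbabilityMeasure P]
    (Z W : Ω → ℝ) (hZ : Measurable Z) (hW : Measurable W)
    (δ M : ℝ) (hδ : 0 ≤ δ) (hM : 0 ≤ M)
    (hclose : ∀ᵐ ω ∂P, |Z ω - W ω| ≤ δ)
    (fZ fW : ℝ → ℝ≥0∞) (hfZ : Measurable fZ) (hfW : Measurable fW)
    (hlawZ : P.map Z = volume.withDensity fZ)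
    (hlawW : P.map W = volume.withDensity fW)
    (hboundZ : ∀ᵐ t ∂(volume : Measure ℝ), fZ t ≤ ENNReal.ofReal M)
    (hboundW : ∀ᵐ t ∂(volume : Measure ℝ), fW t ≤ ENNReal.ofReal M)
    (a b : ℝ) (ha : a ∈ Set.Icc (0 : ℝ) 1) (hb : b ∈ Set.Icc (0 : ℝ) 1) :
    ∫ ω, |a * (if Z ω ≤ a then (1 : ℝ) else 0) - b * (if W ω ≤ b then (1 : ℝ) else 0)| ∂P
      ≤ 2 * M * δ + (1 + M) * |a - b| := by
  obtain ⟨ha0, ha1⟩ := ha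
  obtain ⟨hb0, hb1⟩ := hb
  set S1 : Set Ω := {ω | Z ω ≤ a ∧ ¬ W ω ≤ b} with hS1def
  set S2 : Set Ω := {ω | ¬ Z ω ≤ a ∧ W ω ≤ b} with hS2def
  have hmZ : MeasurableSet {ω | Z ω ≤ a} := measurableSet_le hZ measurable_const
  have hmW : MeasurableSet {ω | W ω ≤ b} := measurableSet_le hW measurable_const
  have hS1 : MeasurableSet S1 := hmZ.inter hmW.compl
  have hS2 : MeasurableSet S2 := hmZ.compl.inter hmW
  set g : Ω → ℝ := fun ω =>
    |a - b| + S1.indicator (fun _ => (1:ℝ)) ω + S2.indicator (fun _ => (1:ℝ)) ω with hgdef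
  have hle : ∀ ω, |a * (if Z ω ≤ a then (1 : ℝ) else 0)
      - b * (if W ω ≤ b then (1 : ℝ) else 0)| ≤ g ω := by
    intro ω
    have hab : 0 ≤ |a - b| := abs_nonneg _
    by_cases h1 : Z ω ≤ a <;> by_cases h2 : W ω ≤ b <;>
      simp only [hgdef, hS1def, hS2def, Set.indicator_apply, Set.mem_setOf_eq, h1, h2,
        if_true, if_false, not_true, not_false_iff, and_self, and_false, false_and, true_and,
        mul_one, mul_zero, sub_zero, zero_sub, abs_neg, sub_self, abs_zero]
    · linarith
    · rw [abs_of_nonneg ha0]; linarith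
    · rw [abs_of_nonneg hb0]; linarith
    · linarith
  have hInt1 : Integrable (S1.indicator fun _ => (1:ℝ)) P := (integrable_const 1).indicator hS1
  have hInt2 : Integrable (S2.indicator fun _ => (1:ℝ)) P := (integrable_const 1).indicator hS2
  have hIntg : Integrable g P := ((integrable_const _).add hInt1).add hInt2
  have hmeasf : Measurable fun ω =>
      |a * (if Z ω ≤ a then (1 : ℝ) else 0) - b * (if W ω ≤ b then (1 : ℝ) else 0)| := by
    apply Measurable.abs
    exact (measurable_const.mul (Measurable.ite hmZ measurable_const measurable_const)).sub
      (measurable_const.mul (Measurable.ite hmW measurable_const measurable_const))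
  have hIntf : Integrable (fun ω =>
      |a * (if Z ω ≤ a then (1 : ℝ) else 0) - b * (if W ω ≤ b then (1 : ℝ) else 0)|) P := by
    refine hIntg.mono' hmeasf.aestronglyMeasurable (ae_of_all _ fun ω => ?_)
    rw [Real.norm_eq_abs, abs_abs]
    exact hle ω
  have hstep : (∫ ω, |a * (if Z ω ≤ a then (1 : ℝ) else 0)
      - b * (if W ω ≤ b then (1 : ℝ) else 0)| ∂P) ≤ ∫ ω, g ω ∂P :=
    integral_mono hIntf hIntg hle
  have hgval : (∫ ω, g ω ∂P) = |a - b| + (P S1).toReal + (P S2).toReal := by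
    have e1 : (∫ ω, g ω ∂P)
        = (∫ ω, (|a - b| + S1.indicator (fun _ => (1:ℝ)) ω) ∂P)
          + ∫ ω, S2.indicator (fun _ => (1:ℝ)) ω ∂P :=
      integral_add ((integrable_const _).add hInt1) hInt2
    have e2 : (∫ ω, (|a - b| + S1.indicator (fun _ => (1:ℝ)) ω) ∂P)
        = (∫ _ω, |a - b| ∂P) + ∫ ω, S1.indicator (fun _ => (1:ℝ)) ω ∂P :=
      integral_add (integrable_const _) hInt1
    rw [e1, e2, integral_const, integral_indicator_const _ hS1, integral_indicator_const _ hS2]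
    simp
    rfl
  have hP1 : (P S1).toReal ≤ M * (δ + max (a - b) 0) := by
    have hsub : ∀ᵐ ω ∂P, ω ∈ S1 → ω ∈ {ω | b < W ω ∧ W ω ≤ a + δ} := by
      filter_upwards [hclose] with ω h hmem
      obtain ⟨hza, hwb⟩ := hmem
      have := abs_le.mp h
      exact ⟨lt_of_not_ge hwb, by linarith [this.1]⟩
    have h1 : P S1 ≤ ENNReal.ofReal (M * (a + δ - b)) :=
      (measure_mono_ae hsub).trans (stmt11_interval_bound P W hW M hM fW hlawW hboundW b (a + δ))
    have h2 : P S1 ≤ ENNReal.ofReal (M * (δ + max (a - b) 0)) := by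
      refine h1.trans (ENNReal.ofReal_le_ofReal ?_)
      have := le_max_left (a - b) 0
      nlinarith [le_max_left (a - b) 0]
    exact ENNReal.toReal_le_of_le_ofReal
      (mul_nonneg hM (add_nonneg hδ (le_max_right _ _))) h2
  have hP2 : (P S2).toReal ≤ M * (δ + max (b - a) 0) := by
    have hsub : ∀ᵐ ω ∂P, ω ∈ S2 → ω ∈ {ω | a < Z ω ∧ Z ω ≤ b + δ} := by
      filter_upwards [hclose] with ω h hmem
      obtain ⟨hza, hwb⟩ := hmem
      have := abs_le.mp h
      exact ⟨lt_of_not_ge hza, by linarith [this.2]⟩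
    have h1 : P S2 ≤ ENNReal.ofReal (M * (b + δ - a)) :=
      (measure_mono_ae hsub).trans (stmt11_interval_bound P Z hZ M hM fZ hlawZ hboundZ a (b + δ))
    have h2 : P S2 ≤ ENNReal.ofReal (M * (δ + max (b - a) 0)) := by
      refine h1.trans (ENNReal.ofReal_le_ofReal ?_)
      nlinarith [le_max_left (b - a) 0]
    exact ENNReal.toReal_le_of_le_ofReal
      (mul_nonneg hM (add_nonneg hδ (le_max_right _ _))) h2
  have hmax : max (a - b) 0 + max (b - a) 0 = |a - b| := by
    rcases le_total a b with h | h
    · rw [abs_of_nonpos (by linarith), max_eq_right (by linarith), max_eq_left (by linarith)]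
      ring
    · rw [abs_of_nonneg (by linarith), max_eq_left (by linarith), max_eq_right (by linarith)]
      ring
  calc (∫ ω, |a * (if Z ω ≤ a then (1 : ℝ) else 0)
      - b * (if W ω ≤ b then (1 : ℝ) else 0)| ∂P)
      ≤ ∫ ω, g ω ∂P := hstep
    _ = |a - b| + (P S1).toReal + (P S2).toReal := hgval
    _ ≤ |a - b| + M * (δ + max (a - b) 0) + M * (δ + max (b - a) 0) := by linarith
    _ = 2 * M * δ + (1 + M) * |a - b| := by rw [← hmax]; ring
end

section
/- Lemma A.2 (quantitative form): Let X̃ be a random vector in ℝ^d. Let β, β′ be elements of a normed space, let p_β, p_{β′} : ℝ^d → ℝ satisfy |p_β(x) − p_{β′}(x)| ≤ α‖β − β′‖ for all x, let a_β, a_{β′} ∈ [0,1] satisfy |a_β − a_{β′}| ≤ α‖β − β′‖, and suppose the laws of p_β(X̃) and of p_{β′}(X̃) each have a Lebesgue density bounded by M. Then E[(a_β·1{p_β(X̃) ≤ a_β} − a_{β′}·1{p_{β′}(X̃) ≤ a_{β′}})²] ≤ (3M + 1)·α·‖β − β′‖. -/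
open MeasureTheory Set
open scoped ENNReal

lemma meas_Ioc_le_aux {Ω : Type*} [MeasurableSpace Ω] (P : Measure Ω) (f : Ω → ℝ)
    (hf : Measurable f) (g : ℝ → ℝ≥0∞) (M : ℝ)
    (hlaw : P.map f = volume.withDensity g)
    (hb : ∀ᵐ t ∂(volume : Measure ℝ), g t ≤ ENNReal.ofReal M)
    (a b : ℝ) :
    P (f ⁻¹' Set.Ioc a b) ≤ ENNReal.ofReal M * ENNReal.ofReal (b - a) := by
  have h1 : P (f ⁻¹' Set.Ioc a b) = (P.map f) (Set.Ioc a b) :=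
    (Measure.map_apply hf measurableSet_Ioc).symm
  rw [h1, hlaw, withDensity_apply _ measurableSet_Ioc]
  calc ∫⁻ t in Set.Ioc a b, g t ≤ ∫⁻ _ in Set.Ioc a b, ENNReal.ofReal M :=
        lintegral_mono_ae (ae_restrict_of_ae hb)
    _ = ENNReal.ofReal M * volume (Set.Ioc a b) := by rw [setLIntegral_const]
    _ = ENNReal.ofReal M * ENNReal.ofReal (b - a) := by rw [Real.volume_Ioc]

/-- Lemma A.2, quantitative form: Let `X̃` be a random vector in `ℝ^d`,
`β, β′` elements of a normed space, `p_β, p_{β′} : ℝ^d → ℝ` with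
`|p_β(x) − p_{β′}(x)| ≤ α‖β − β′‖` for all `x`, `a_β, a_{β′} ∈ [0,1]` with
`|a_β − a_{β′}| ≤ α‖β − β′‖`, and suppose the laws of `p_β(X̃)` and `p_{β′}(X̃)` each
have a Lebesgue density bounded by `M`.  Then
`E[(a_β·1{p_β(X̃) ≤ a_β} − a_{β′}·1{p_{β′}(X̃) ≤ a_{β′}})²] ≤ (3M + 1)·α·‖β − β′‖`. -/
theorem stmt12 {Ω : Type*} [MeasurableSpace Ω] (P : Measure Ω) [IsProbabilityMeasure P]
    {d : ℕ} (Xt : Ω → (Fin d → ℝ)) (hXt : Measurable Xt)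
    {E : Type*} [NormedAddCommGroup E] (β β' : E)
    (α M : ℝ) (hα : 0 ≤ α) (hM : 0 ≤ M)
    (pβ pβ' : (Fin d → ℝ) → ℝ) (hpβ : Measurable pβ) (hpβ' : Measurable pβ')
    (hpLip : ∀ x, |pβ x - pβ' x| ≤ α * ‖β - β'‖)
    (aβ aβ' : ℝ) (haβ : aβ ∈ Set.Icc (0 : ℝ) 1) (haβ' : aβ' ∈ Set.Icc (0 : ℝ) 1)
    (haLip : |aβ - aβ'| ≤ α * ‖β - β'‖)
    (fβ fβ' : ℝ → ℝ≥0∞) (hfβ : Measurable fβ) (hfβ' : Measurable fβ')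
    (hlawβ : P.map (fun ω => pβ (Xt ω)) = volume.withDensity fβ)
    (hlawβ' : P.map (fun ω => pβ' (Xt ω)) = volume.withDensity fβ')
    (hboundβ : ∀ᵐ t ∂(volume : Measure ℝ), fβ t ≤ ENNReal.ofReal M)
    (hboundβ' : ∀ᵐ t ∂(volume : Measure ℝ), fβ' t ≤ ENNReal.ofReal M) :
    ∫ ω, (aβ * (if pβ (Xt ω) ≤ aβ then (1 : ℝ) else 0)
        - aβ' * (if pβ' (Xt ω) ≤ aβ' then (1 : ℝ) else 0)) ^ 2 ∂P
      ≤ (3 * M + 1) * α * ‖β - β'‖ := by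
  obtain ⟨ha0, ha1⟩ := haβ
  obtain ⟨ha0', ha1'⟩ := haβ'
  set ε : ℝ := α * ‖β - β'‖ with hεdef
  have hε0 : 0 ≤ ε := mul_nonneg hα (norm_nonneg _)
  have hmβ : Measurable (fun ω => pβ (Xt ω)) := hpβ.comp hXt
  have hmβ' : Measurable (fun ω => pβ' (Xt ω)) := hpβ'.comp hXt
  set S1 : Set Ω := {ω | pβ (Xt ω) ≤ aβ ∧ ¬ pβ' (Xt ω) ≤ aβ'} with hS1def
  set S2 : Set Ω := {ω | pβ' (Xt ω) ≤ aβ' ∧ ¬ pβ (Xt ω) ≤ aβ} with hS2def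
  have hS1m : MeasurableSet S1 :=
    (measurableSet_le hmβ measurable_const).inter
      ((measurableSet_le hmβ' measurable_const).compl)
  have hS2m : MeasurableSet S2 :=
    (measurableSet_le hmβ' measurable_const).inter
      ((measurableSet_le hmβ measurable_const).compl)
  have hDm : MeasurableSet (S1 ∪ S2) := hS1m.union hS2m
  have haLε := abs_le.mp haLip
  -- subset inclusions
  have hsub1 : S1 ⊆ (fun ω => pβ' (Xt ω)) ⁻¹' Set.Ioc aβ' (aβ + ε) := by
    rintro ω ⟨h1, h2⟩
    have hlip := abs_le.mp (hpLip (Xt ω))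
    exact ⟨lt_of_not_ge h2, by simp only [hεdef] at *; linarith⟩
  have hsub2 : S2 ⊆ (fun ω => pβ (Xt ω)) ⁻¹' Set.Ioc aβ (aβ' + ε) := by
    rintro ω ⟨h1, h2⟩
    have hlip := abs_le.mp (hpLip (Xt ω))
    exact ⟨lt_of_not_ge h2, by simp only [hεdef] at *; linarith⟩
  have hP1 : P S1 ≤ ENNReal.ofReal M * ENNReal.ofReal (aβ + ε - aβ') :=
    (measure_mono hsub1).trans
      (meas_Ioc_le_aux P _ hmβ' fβ' M hlawβ' hboundβ' aβ' (aβ + ε))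
  have hP2 : P S2 ≤ ENNReal.ofReal M * ENNReal.ofReal (aβ' + ε - aβ) :=
    (measure_mono hsub2).trans
      (meas_Ioc_le_aux P _ hmβ fβ M hlawβ hboundβ aβ (aβ' + ε))
  have haε1 : 0 ≤ aβ + ε - aβ' := by linarith [haLε.1]
  have haε2 : 0 ≤ aβ' + ε - aβ := by linarith [haLε.2]
  have hPD : P (S1 ∪ S2) ≤ ENNReal.ofReal (2 * M * ε) := by
    calc P (S1 ∪ S2) ≤ P S1 + P S2 := measure_union_le _ _
      _ ≤ ENNReal.ofReal M * ENNReal.ofReal (aβ + ε - aβ')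
          + ENNReal.ofReal M * ENNReal.ofReal (aβ' + ε - aβ) := add_le_add hP1 hP2
      _ = ENNReal.ofReal (2 * M * ε) := by
          rw [← mul_add, ← ENNReal.ofReal_add haε1 haε2, ← ENNReal.ofReal_mul hM]
          congr 1; ring
  have hDr : (P (S1 ∪ S2)).toReal ≤ 2 * M * ε :=
    ENNReal.toReal_le_of_le_ofReal (by positivity) hPD
  -- pointwise bound
  have hpt : ∀ ω, (aβ * (if pβ (Xt ω) ≤ aβ then (1 : ℝ) else 0)
        - aβ' * (if pβ' (Xt ω) ≤ aβ' then (1 : ℝ) else 0)) ^ 2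
      ≤ (S1 ∪ S2).indicator (fun _ => (1 : ℝ)) ω + ε := by
    intro ω
    have hind0 : (0 : ℝ) ≤ (S1 ∪ S2).indicator (fun _ => (1 : ℝ)) ω :=
      Set.indicator_nonneg (fun _ _ => zero_le_one) ω
    by_cases h1 : pβ (Xt ω) ≤ aβ <;> by_cases h2 : pβ' (Xt ω) ≤ aβ'
    · rw [if_pos h1, if_pos h2]
      have habs : |aβ - aβ'| ≤ 1 := by rw [abs_le]; constructor <;> linarith
      have hsq : (aβ - aβ') ^ 2 ≤ ε := by
        nlinarith [sq_abs (aβ - aβ'), abs_nonneg (aβ - aβ')]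
      calc (aβ * 1 - aβ' * 1) ^ 2 = (aβ - aβ') ^ 2 := by ring
        _ ≤ ε := hsq
        _ ≤ _ := le_add_of_nonneg_left hind0
    · rw [if_pos h1, if_neg h2]
      have hmem : ω ∈ S1 ∪ S2 := Or.inl ⟨h1, h2⟩
      rw [Set.indicator_of_mem hmem]
      nlinarith
    · rw [if_neg h1, if_pos h2]
      have hmem : ω ∈ S1 ∪ S2 := Or.inr ⟨h2, h1⟩
      rw [Set.indicator_of_mem hmem]
      nlinarith
    · rw [if_neg h1, if_neg h2]
      nlinarith
  have hint : Integrable (fun ω => (S1 ∪ S2).indicator (fun _ => (1 : ℝ)) ω + ε) P :=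
    ((integrable_const (1 : ℝ)).indicator hDm).add (integrable_const ε)
  calc ∫ ω, (aβ * (if pβ (Xt ω) ≤ aβ then (1 : ℝ) else 0)
        - aβ' * (if pβ' (Xt ω) ≤ aβ' then (1 : ℝ) else 0)) ^ 2 ∂P
      ≤ ∫ ω, ((S1 ∪ S2).indicator (fun _ => (1 : ℝ)) ω + ε) ∂P :=
        integral_mono_of_nonneg (ae_of_all _ fun ω => sq_nonneg _) hint (ae_of_all _ hpt)
    _ = (P (S1 ∪ S2)).toReal + ε := by
        rw [integral_add ((integrable_const (1 : ℝ)).indicator hDm) (integrable_const ε),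
          integral_indicator_const _ hDm, integral_const]
        simp [measureReal_def]
    _ ≤ 2 * M * ε + ε := by linarith
    _ ≤ (3 * M + 1) * α * ‖β - β'‖ := by
        have h : (3 * M + 1) * α * ‖β - β'‖ = (3 * M + 1) * ε := by rw [hεdef]; ring
        rw [h]; nlinarith
end

section
/- Lemma A.2 (limit form): In the setting of the parametrized family, suppose for every β in the parameter set B the functions satisfy the Lipschitz bounds |p₀(x,β) − p₀(x,β′)| ≤ α‖β − β′‖ and |F(y|x,β) − F(y|x,β′)| ≤ α‖β − β′‖ with F(y|x,β) ∈ [0,1], and the law of p₀(X̃,β) has a Lebesgue density bounded by M for each β. Let β̂_n be B-valued random variables converging in probability to β₀. Then for each fixed (x,y), the random sequence e_n = E_{X̃}[(F(y|x,β₀)·1{p₀(X̃,β₀) ≤ F(y|x,β₀)} − F(y|x,β̂_n)·1{p₀(X̃,β̂_n) ≤ F(y|x,β̂_n)})²] (the expectation taken over an independent copy X̃ of the covariate vector) converges to 0 in probability. -/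
open MeasureTheory Set Filter
open scoped ENNReal

/-- Lemma A.2, limit form: In the parametrized family, suppose for all
`β, β′ ∈ B` the Lipschitz bounds `|p₀(x,β) − p₀(x,β′)| ≤ α‖β − β′‖` and
`|F(y|x,β) − F(y|x,β′)| ≤ α‖β − β′‖` hold, `F(y|x,β) ∈ [0,1]`, and for each `β ∈ B`
the law of `p₀(X̃,β)` (with `X̃` an independent copy of the covariate vector, of law
`μX`) has a Lebesgue density bounded by `M`.  If `β̂_n → β₀` in probability, then
`e_n = E_{X̃}[(F(y|x,β₀)·1{p₀(X̃,β₀) ≤ F(y|x,β₀)}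
        − F(y|x,β̂_n)·1{p₀(X̃,β̂_n) ≤ F(y|x,β̂_n)})²] → 0` in probability. -/
theorem stmt13 {Ω : Type*} [MeasurableSpace Ω] (P : Measure Ω) [IsProbabilityMeasure P]
    {d : ℕ} (μX : Measure (Fin d → ℝ)) [IsProbabilityMeasure μX]
    {E : Type*} [NormedAddCommGroup E] [MeasurableSpace E] [BorelSpace E] (B : Set E)
    (α M : ℝ) (hα : 0 ≤ α) (hM : 0 ≤ M)
    (p₀ : (Fin d → ℝ) → E → ℝ) (hp₀ : ∀ β, Measurable fun x => p₀ x β)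
    (Fxy : E → ℝ)
    (hpLip : ∀ β ∈ B, ∀ β' ∈ B, ∀ x, |p₀ x β - p₀ x β'| ≤ α * ‖β - β'‖)
    (hFLip : ∀ β ∈ B, ∀ β' ∈ B, |Fxy β - Fxy β'| ≤ α * ‖β - β'‖)
    (hF01 : ∀ β ∈ B, Fxy β ∈ Set.Icc (0 : ℝ) 1)
    (hdens : ∀ β ∈ B, ∃ f : ℝ → ℝ≥0∞, Measurable f ∧
      μX.map (fun x => p₀ x β) = volume.withDensity f ∧
      ∀ᵐ t ∂(volume : Measure ℝ), f t ≤ ENNReal.ofReal M)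
    (β₀ : E) (hβ₀ : β₀ ∈ B)
    (βhat : ℕ → Ω → E) (hβhatmeas : ∀ n, Measurable (βhat n))
    (hβhatB : ∀ n ω, βhat n ω ∈ B)
    (hprob : TendstoInMeasure P βhat atTop (fun _ => β₀)) :
    TendstoInMeasure P
      (fun n ω => ∫ x,
        (Fxy β₀ * (if p₀ x β₀ ≤ Fxy β₀ then (1 : ℝ) else 0)
          - Fxy (βhat n ω) * (if p₀ x (βhat n ω) ≤ Fxy (βhat n ω) then (1 : ℝ) else 0)) ^ 2
        ∂μX)
      atTop (fun _ => (0 : ℝ)) := by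

  have hkey : ∀ β ∈ B, (∫ x, (Fxy β₀ * (if p₀ x β₀ ≤ Fxy β₀ then (1 : ℝ) else 0)
      - Fxy β * (if p₀ x β ≤ Fxy β then (1 : ℝ) else 0)) ^ 2 ∂μX)
      ≤ α * (1 + 4 * M) * ‖β - β₀‖ := by
    intro β hβ
    obtain ⟨f, hfmeas, hmap, hfM⟩ := hdens β₀ hβ₀
    set δ' := ‖β - β₀‖ with hδ'
    have hδ'0 : 0 ≤ δ' := norm_nonneg _
    set l := Fxy β₀ - 2 * α * δ' with hl
    set r := Fxy β₀ + 2 * α * δ' with hr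
    set A : Set (Fin d → ℝ) := (fun x => p₀ x β₀) ⁻¹' Set.Icc l r with hA
    have hAmeas : MeasurableSet A := (hp₀ β₀) measurableSet_Icc
    have hF0 := hF01 β₀ hβ₀
    have hFβ := hF01 β hβ
    have hFd : |Fxy β₀ - Fxy β| ≤ α * δ' := by
      have h := hFLip β₀ hβ₀ β hβ
      rwa [norm_sub_rev] at h
    have hpt : ∀ x, (Fxy β₀ * (if p₀ x β₀ ≤ Fxy β₀ then (1 : ℝ) else 0)
        - Fxy β * (if p₀ x β ≤ Fxy β then (1 : ℝ) else 0)) ^ 2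
        ≤ α * δ' + A.indicator (fun _ => (1 : ℝ)) x := by
      intro x
      have hpd : |p₀ x β₀ - p₀ x β| ≤ α * δ' := by
        have h := hpLip β₀ hβ₀ β hβ x
        rwa [norm_sub_rev] at h
      have hind : (0 : ℝ) ≤ A.indicator (fun _ => (1 : ℝ)) x :=
        Set.indicator_nonneg (fun _ _ => zero_le_one) x
      obtain ⟨hpd1, hpd2⟩ := abs_le.mp hpd
      obtain ⟨hFd1, hFd2⟩ := abs_le.mp hFd
      have hαδ : 0 ≤ α * δ' := mul_nonneg hα hδ'0
      by_cases h0 : p₀ x β₀ ≤ Fxy β₀ <;> by_cases h1 : p₀ x β ≤ Fxy β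
      · rw [if_pos h0, if_pos h1]
        nlinarith [hF0.1, hF0.2, hFβ.1, hFβ.2]
      · rw [if_pos h0, if_neg h1]
        have hxA : x ∈ A := by
          push_neg at h1
          simp only [hA, Set.mem_preimage, Set.mem_Icc, hl, hr]
          constructor <;> linarith
        rw [Set.indicator_of_mem hxA]
        nlinarith [hF0.1, hF0.2]
      · rw [if_neg h0, if_pos h1]
        have hxA : x ∈ A := by
          push_neg at h0
          simp only [hA, Set.mem_preimage, Set.mem_Icc, hl, hr]
          constructor <;> linarith
        rw [Set.indicator_of_mem hxA]
        nlinarith [hFβ.1, hFβ.2]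
      · rw [if_neg h0, if_neg h1]
        simpa using add_nonneg hαδ hind
    have hg_int : Integrable (fun x => α * δ' + A.indicator (fun _ => (1 : ℝ)) x) μX :=
      (integrable_const _).add ((integrable_const (1 : ℝ)).indicator hAmeas)
    have hint : (∫ x, (Fxy β₀ * (if p₀ x β₀ ≤ Fxy β₀ then (1 : ℝ) else 0)
        - Fxy β * (if p₀ x β ≤ Fxy β then (1 : ℝ) else 0)) ^ 2 ∂μX)
        ≤ ∫ x, (α * δ' + A.indicator (fun _ => (1 : ℝ)) x) ∂μX :=
      integral_mono_of_nonneg (Filter.Eventually.of_forall fun x => sq_nonneg _) hg_int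
        (Filter.Eventually.of_forall hpt)
    have hgval : (∫ x, (α * δ' + A.indicator (fun _ => (1 : ℝ)) x) ∂μX)
        = α * δ' + (μX A).toReal := by
      rw [integral_add (integrable_const _) ((integrable_const (1 : ℝ)).indicator hAmeas),
        integral_const, integral_indicator_const _ hAmeas]
      simp [measure_univ]
      rfl
    have hmA : μX A ≤ ENNReal.ofReal (M * (4 * (α * δ'))) := by
      have h1 : μX A = (μX.map (fun x => p₀ x β₀)) (Set.Icc l r) := by
        rw [Measure.map_apply (hp₀ β₀) measurableSet_Icc]
      rw [h1, hmap, withDensity_apply _ measurableSet_Icc]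
      calc ∫⁻ t in Set.Icc l r, f t ∂volume
          ≤ ∫⁻ _ in Set.Icc l r, ENNReal.ofReal M ∂volume :=
            lintegral_mono_ae (ae_restrict_of_ae hfM)
        _ = ENNReal.ofReal M * volume (Set.Icc l r) := by rw [setLIntegral_const]
        _ ≤ ENNReal.ofReal (M * (4 * (α * δ'))) := by
            rw [Real.volume_Icc]
            have hrl : r - l = 4 * (α * δ') := by rw [hl, hr]; ring
            rw [hrl, ← ENNReal.ofReal_mul hM]
    have hmA' : (μX A).toReal ≤ M * (4 * (α * δ')) :=
      ENNReal.toReal_le_of_le_ofReal (by positivity) hmA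
    calc (∫ x, (Fxy β₀ * (if p₀ x β₀ ≤ Fxy β₀ then (1 : ℝ) else 0)
        - Fxy β * (if p₀ x β ≤ Fxy β then (1 : ℝ) else 0)) ^ 2 ∂μX)
        ≤ α * δ' + (μX A).toReal := by rw [← hgval]; exact hint
      _ ≤ α * δ' + M * (4 * (α * δ')) := by linarith
      _ = α * (1 + 4 * M) * δ' := by ring
  rw [tendstoInMeasure_iff_dist] at hprob ⊢
  intro ε hε
  set c : ℝ := α * (1 + 4 * M) with hc
  have hc0 : 0 ≤ c := by positivity
  set δ := ε / (c + 1) with hδ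
  have hδ0 : 0 < δ := by positivity
  refine tendsto_of_tendsto_of_tendsto_of_le_of_le tendsto_const_nhds (hprob δ hδ0)
    (fun n => zero_le) (fun n => measure_mono fun ω hω => ?_)
  simp only [Set.mem_setOf_eq] at hω ⊢
  by_contra hlt
  push_neg at hlt
  have h1 := hkey (βhat n ω) (hβhatB n ω)
  have hnorm : ‖βhat n ω - β₀‖ = dist (βhat n ω) β₀ := (dist_eq_norm _ _).symm
  have he0 : (0 : ℝ) ≤ ∫ x,
      (Fxy β₀ * (if p₀ x β₀ ≤ Fxy β₀ then (1 : ℝ) else 0)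
        - Fxy (βhat n ω) * (if p₀ x (βhat n ω) ≤ Fxy (βhat n ω) then (1 : ℝ) else 0)) ^ 2 ∂μX :=
    integral_nonneg fun x => sq_nonneg _
  rw [Real.dist_eq, sub_zero, abs_of_nonneg he0] at hω
  have h2 : c * ‖βhat n ω - β₀‖ ≤ c * δ := by
    rw [hnorm]
    exact mul_le_mul_of_nonneg_left hlt.le hc0
  have h3 : c * δ < ε := by
    rw [hδ]
    have hne : c + 1 ≠ 0 := by positivity
    have : (c + 1) * (ε / (c + 1)) = ε := by field_simp
    nlinarith [hδ0]
  linarith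
end

section
/- Assume each ν_x has no atoms and the law of p₀(X) has no atoms, and let (X₁,Y₁), (X₂,Y₂), … be i.i.d. with joint law μ_X ⊗ κ. Then for every bounded continuous function f : ℝ → ℝ, almost surely (1/n)·Σ_{i=1}^n f(H(F(Y_i|X_i))) → ∫₀¹ f(u) du as n → ∞; i.e., the empirical distribution of the model errors H(F(Y_i|X_i)) converges weakly to the uniform distribution on [0,1] almost surely. -/
open MeasureTheory ProbabilityTheory Set Filter
open scoped ENNReal ProbabilityTheory Topology

private lemma aux_iUnion_Iic (b : ℝ) :
    (⋃ n : ℕ, Iic (b - 1 / ((n : ℝ) + 1))) = Iio b := by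
  ext y
  simp only [mem_iUnion, mem_Iic, mem_Iio]
  constructor
  · rintro ⟨n, hn⟩
    have h1 : (0:ℝ) < 1 / ((n:ℝ) + 1) := by positivity
    linarith
  · intro hy
    obtain ⟨n, hn⟩ := exists_nat_one_div_lt (sub_pos.2 hy)
    exact ⟨n, by linarith⟩

private lemma aux_iInter_Iic (b : ℝ) :
    (⋂ n : ℕ, Iic (b + 1 / ((n : ℝ) + 1))) = Iic b := by
  ext y
  simp only [mem_iInter, mem_Iic]
  constructor
  · intro h
    by_contra hby
    push_neg at hby
    obtain ⟨n, hn⟩ := exists_nat_one_div_lt (sub_pos.2 hby)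
    have := h n
    linarith
  · intro h n
    have h1 : (0:ℝ) < 1 / ((n:ℝ) + 1) := by positivity
    linarith

private lemma aux_mono_seq (b : ℝ) : Monotone fun n : ℕ => b - 1 / ((n:ℝ) + 1) := by
  intro n m hnm
  have h1 : ((n:ℝ)) ≤ (m:ℝ) := Nat.cast_le.2 hnm
  have : 1 / ((m:ℝ) + 1) ≤ 1 / ((n:ℝ) + 1) :=
    one_div_le_one_div_of_le (by positivity) (by linarith)
  simp only
  linarith

private lemma aux_anti_seq (b : ℝ) : Antitone fun n : ℕ => b + 1 / ((n:ℝ) + 1) := by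
  intro n m hnm
  have h1 : ((n:ℝ)) ≤ (m:ℝ) := Nat.cast_le.2 hnm
  have : 1 / ((m:ℝ) + 1) ≤ 1 / ((n:ℝ) + 1) :=
    one_div_le_one_div_of_le (by positivity) (by linarith)
  simp only
  linarith

private lemma genA (m : Measure ℝ) [IsProbabilityMeasure m] [NullSingletonClass m]
    (S : Set ℝ) (c : ℝ)
    (hlow : ∀ ⦃z y : ℝ⦄, z ≤ y → y ∈ S → z ∈ S)
    (hS : ∀ y ∈ S, m (Iic y) ≤ ENNReal.ofReal c)
    (hS' : ∀ y, y ∉ S → ENNReal.ofReal c ≤ m (Iic y))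
    (hne : S.Nonempty) (hub : ∃ y, y ∉ S) :
    m S = ENNReal.ofReal c := by
  obtain ⟨y₁, hy₁⟩ := hub
  have hbdd : BddAbove S := by
    refine ⟨y₁, fun y hy => ?_⟩
    by_contra hlt
    push_neg at hlt
    exact hy₁ (hlow hlt.le hy)
  set b := sSup S with hb
  have hIio : Iio b ⊆ S := by
    intro y hy
    obtain ⟨z, hzS, hyz⟩ := exists_lt_of_lt_csSup hne hy
    exact hlow hyz.le hzS
  have hSIic : S ⊆ Iic b := fun y hy => le_csSup hbdd hy
  have hup : m (Iio b) ≤ ENNReal.ofReal c := by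
    rw [← aux_iUnion_Iic b,
      Monotone.measure_iUnion (fun n k hnk => Iic_subset_Iic.2 (aux_mono_seq b hnk))]
    refine iSup_le fun n => hS _ (hIio ?_)
    have h1 : (0:ℝ) < 1 / ((n:ℝ) + 1) := by positivity
    simp only [mem_Iio]
    linarith
  have hdown : ENNReal.ofReal c ≤ m (Iic b) := by
    rw [← aux_iInter_Iic b,
      Antitone.measure_iInter (fun n k hnk => Iic_subset_Iic.2 (aux_anti_seq b hnk))
        (fun n => nullMeasurableSet_Iic) ⟨0, measure_ne_top m _⟩]
    refine le_iInf fun n => hS' _ fun hmem => ?_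
    have h1 : (0:ℝ) < 1 / ((n:ℝ) + 1) := by positivity
    have h2 := le_csSup hbdd hmem
    linarith
  have hIicIio : m (Iic b) = m (Iio b) := by
    have h1 : m (Iic b) ≤ m (Iio b) + m {b} := by
      rw [← Iio_union_right]
      exact measure_union_le _ _
    rw [measure_singleton, add_zero] at h1
    exact le_antisymm h1 (measure_mono Iio_subset_Iic_self)
  have h1 : m (Iio b) = ENNReal.ofReal c := le_antisymm hup (hIicIio ▸ hdown)
  have h2 : m (Iic b) = ENNReal.ofReal c := hIicIio.trans h1
  exact le_antisymm (le_trans (measure_mono hSIic) h2.le) (h1 ▸ measure_mono hIio)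

private lemma inner_meas (mν : Measure ℝ) [IsProbabilityMeasure mν] [NullSingletonClass mν]
    (h0 : mν (Iic 0) = 0) (p s : ℝ) (hp0 : 0 < p) (hp1 : p < 1) (hs1 : s < 1)
    (mκ : Measure ℝ)
    (hmκ : mκ = ENNReal.ofReal p • Measure.dirac 0 + ENNReal.ofReal (1 - p) • mν) :
    mκ {y | (mκ (Iic y)).toReal ≤ s} = if p ≤ s then ENNReal.ofReal s else 0 := by
  have hν_le : ∀ y : ℝ, y ≤ 0 → mν (Iic y) = 0 := fun y hy =>
    le_antisymm (h0 ▸ measure_mono (Iic_subset_Iic.2 hy)) (zero_le)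
  have hκIic : ∀ y, mκ (Iic y)
      = (if (0:ℝ) ≤ y then ENNReal.ofReal p else 0) + ENNReal.ofReal (1 - p) * mν (Iic y) := by
    intro y
    rw [hmκ]
    simp only [Measure.coe_add, Measure.coe_smul, Pi.add_apply, Pi.smul_apply, smul_eq_mul]
    congr 1
    by_cases hy : (0:ℝ) ≤ y
    · rw [if_pos hy, Measure.dirac_apply_of_mem (mem_Iic.2 hy), mul_one]
    · rw [if_neg hy, Measure.dirac_apply' _ measurableSet_Iic,
        indicator_of_notMem (by simpa using hy), mul_zero]
  have hG : ∀ y, (mκ (Iic y)).toReal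
      = (if (0:ℝ) ≤ y then p else 0) + (1 - p) * (mν (Iic y)).toReal := by
    intro y
    rw [hκIic y, ENNReal.toReal_add ?fin1 ?fin2, ENNReal.toReal_mul,
      ENNReal.toReal_ofReal (by linarith : (0:ℝ) ≤ 1 - p)]
    · congr 1
      by_cases hy : (0:ℝ) ≤ y <;> simp [hy, ENNReal.toReal_ofReal hp0.le]
    case fin1 => split <;> simp
    case fin2 => exact ENNReal.mul_ne_top ENNReal.ofReal_ne_top (measure_ne_top _ _)
  have hGν_nonneg : ∀ y : ℝ, (0:ℝ) ≤ (mν (Iic y)).toReal := fun y => ENNReal.toReal_nonneg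
  by_cases hps : p ≤ s
  · rw [if_pos hps]
    set c := (s - p) / (1 - p) with hc
    have h1p : (0:ℝ) < 1 - p := by linarith
    have hc0 : 0 ≤ c := div_nonneg (by linarith) h1p.le
    have hc1 : c < 1 := (div_lt_one h1p).2 (by linarith)
    have hSeq : {y | (mκ (Iic y)).toReal ≤ s} = {y | (mν (Iic y)).toReal ≤ c} := by
      ext y
      simp only [mem_setOf_eq, hG y]
      by_cases hy : (0:ℝ) ≤ y
      · rw [if_pos hy]
        constructor
        · intro h
          rw [hc, le_div_iff₀ h1p]
          linarith [mul_comm ((mν (Iic y)).toReal) (1 - p)]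
        · intro h
          have h2 := (le_div_iff₀ h1p).1 h
          linarith [mul_comm ((mν (Iic y)).toReal) (1 - p)]
      · rw [if_neg hy]
        rw [hν_le y (le_of_not_ge hy)]
        simp only [ENNReal.toReal_zero, mul_zero, add_zero, zero_add]
        exact iff_of_true (by linarith) hc0
    have hmemS : ∀ y : ℝ, y ≤ 0 → (mν (Iic y)).toReal ≤ c := by
      intro y hy; rw [hν_le y hy]; simpa using hc0
    have hνS : mν {y | (mν (Iic y)).toReal ≤ c} = ENNReal.ofReal c := by
      apply genA
      · intro z y hzy hy
        exact le_trans
          (ENNReal.toReal_mono (measure_ne_top _ _) (measure_mono (Iic_subset_Iic.2 hzy))) hy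
      · intro y hy
        rw [← ENNReal.ofReal_toReal (measure_ne_top mν (Iic y))]
        exact ENNReal.ofReal_le_ofReal hy
      · intro y hy
        rw [← ENNReal.ofReal_toReal (measure_ne_top mν (Iic y))]
        exact ENNReal.ofReal_le_ofReal (le_of_lt (lt_of_not_ge hy))
      · exact ⟨0, hmemS 0 le_rfl⟩
      · have htend := tendsto_measure_Iic_atTop mν
        rw [measure_univ] at htend
        have hev : ∀ᶠ y in atTop, ENNReal.ofReal c < mν (Iic y) :=
          htend.eventually (eventually_gt_nhds (ENNReal.ofReal_lt_one.2 hc1))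
        obtain ⟨y, hy⟩ := hev.exists
        refine ⟨y, fun hmem => ?_⟩
        have h3 : mν (Iic y) ≤ ENNReal.ofReal c := by
          rw [← ENNReal.ofReal_toReal (measure_ne_top mν (Iic y))]
          exact ENNReal.ofReal_le_ofReal hmem
        exact absurd hy (not_lt.2 h3)
    rw [hSeq, hmκ]
    simp only [Measure.coe_add, Pi.add_apply, Measure.coe_smul, Pi.smul_apply, smul_eq_mul]
    have hdir : Measure.dirac (0:ℝ) {y | (mν (Iic y)).toReal ≤ c} = 1 :=
      Measure.dirac_apply_of_mem (hmemS 0 le_rfl)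
    rw [hdir, hνS, mul_one, ← ENNReal.ofReal_mul (by linarith : (0:ℝ) ≤ 1 - p),
      ← ENNReal.ofReal_add hp0.le (by positivity)]
    congr 1
    rw [hc]
    field_simp
    ring
  · rw [if_neg hps]
    push_neg at hps
    have hsub : {y | (mκ (Iic y)).toReal ≤ s} ⊆ Iio 0 := by
      intro y hy
      simp only [mem_setOf_eq, hG y] at hy
      by_contra hy0
      simp only [mem_Iio, not_lt] at hy0
      rw [if_pos hy0] at hy
      nlinarith [hGν_nonneg y]
    refine le_antisymm (le_trans (measure_mono hsub) ?_) (zero_le)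
    rw [hmκ]
    simp only [Measure.coe_add, Pi.add_apply, Measure.coe_smul, Pi.smul_apply, smul_eq_mul]
    have h2 : mν (Iio 0) = 0 := le_antisymm (h0 ▸ measure_mono Iio_subset_Iic_self) (zero_le)
    have h1 : Measure.dirac (0:ℝ) (Iio (0:ℝ)) = 0 := by
      rw [Measure.dirac_apply' _ measurableSet_Iio, indicator_of_notMem (by simp)]
    rw [h1, h2, mul_zero, mul_zero, add_zero]

/-- In the semicontinuous regression setup with each `ν_x` nonatomic and
the law of `p₀(X)` nonatomic, let `(X₁,Y₁), (X₂,Y₂), …` be i.i.d. with joint law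
`μ_X ⊗ κ`, and `H(s) = s·Pr(p₀(X) ≤ s)`.  Then for every bounded continuous
`f : ℝ → ℝ`, almost surely `(1/n)·Σ_{i=1}^n f(H(F(Y_i|X_i))) → ∫₀¹ f(u) du`:
the empirical distribution of the model errors converges weakly to the uniform
distribution on `[0,1]` almost surely. -/
theorem stmt16 {d : ℕ} {Ω : Type*} [MeasurableSpace Ω] (P : Measure Ω)
    [IsProbabilityMeasure P]
    (μX : Measure (Fin d → ℝ)) [IsProbabilityMeasure μX]
    (p₀ : (Fin d → ℝ) → ℝ) (hp₀ : Measurable p₀)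
    (hp₀mem : ∀ x, p₀ x ∈ Set.Ioo (0 : ℝ) 1)
    (ν : (Fin d → ℝ) → Measure ℝ) (hν : ∀ x, IsProbabilityMeasure (ν x))
    (hν0 : ∀ x, ν x (Set.Iic 0) = 0) (hνatom : ∀ x, NoAtoms (ν x))
    (hp₀X : NoAtoms (μX.map p₀))
    (κ : Kernel (Fin d → ℝ) ℝ) [IsMarkovKernel κ]
    (hκ : ∀ x, κ x = ENNReal.ofReal (p₀ x) • Measure.dirac 0
        + ENNReal.ofReal (1 - p₀ x) • ν x)
    (F : ℝ → (Fin d → ℝ) → ℝ) (hF : ∀ y x, F y x = (κ x (Set.Iic y)).toReal)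
    (XY : ℕ → Ω → (Fin d → ℝ) × ℝ) (hXYmeas : ∀ i, Measurable (XY i))
    (hindep : iIndepFun XY P)
    (hident : ∀ i, P.map (XY i) = μX ⊗ₘ κ)
    (H : ℝ → ℝ) (hH : ∀ s ∈ Set.Icc (0 : ℝ) 1,
      H s = s * (μX {x | p₀ x ≤ s}).toReal) :
    ∀ f : BoundedContinuousFunction ℝ ℝ, ∀ᵐ ω ∂P,
      Tendsto (fun n : ℕ =>
          (1 / (n : ℝ)) * ∑ i ∈ Finset.range n, f (H (F ((XY i ω).2) ((XY i ω).1))))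
        atTop (nhds (∫ u in (0 : ℝ)..1, f u)) := by
  intro f
  -- basic definitions
  set Gp : ℝ → ℝ := fun s => (μX {x | p₀ x ≤ s}).toReal with hGpdef
  set H' : ℝ → ℝ := fun s => s * Gp s with hH'def
  set Fm : (Fin d → ℝ) × ℝ → ℝ := fun q => (κ q.1 (Iic q.2)).toReal with hFmdef
  -- measurability of Fm
  have hFmmeas : Measurable Fm := by
    have ht : MeasurableSet {q : ((Fin d → ℝ) × ℝ) × ℝ | q.2 ≤ q.1.2} :=
      measurableSet_le measurable_snd measurable_fst.snd
    have h := Kernel.measurable_kernel_prodMk_left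
      (κ := Kernel.prodMkRight ℝ κ) ht
    have h2 : (fun q : (Fin d → ℝ) × ℝ => κ q.1 (Iic q.2))
        = fun q => (Kernel.prodMkRight ℝ κ) q
            (Prod.mk q ⁻¹' {r : ((Fin d → ℝ) × ℝ) × ℝ | r.2 ≤ r.1.2}) := by
      funext q
      rw [Kernel.prodMkRight_apply]
      rfl
    rw [hFmdef]
    exact ENNReal.measurable_toReal.comp (h2 ▸ h)
  -- facts about Gp
  have hGpmono : Monotone Gp := fun a b hab =>
    ENNReal.toReal_mono (measure_ne_top _ _) (measure_mono fun x hx => le_trans hx hab)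
  have hGpnonneg : ∀ s, 0 ≤ Gp s := fun s => ENNReal.toReal_nonneg
  have hGple : ∀ s, Gp s ≤ 1 := fun s =>
    ENNReal.toReal_le_of_le_ofReal zero_le_one (by simpa using prob_le_one)
  have hGpneg : ∀ s : ℝ, s < 0 → Gp s = 0 := by
    intro s hs
    have hempty : {x | p₀ x ≤ s} = ∅ := by
      ext x
      simp only [mem_setOf_eq, mem_empty_iff_false, iff_false, not_le]
      exact lt_of_lt_of_le hs (le_of_lt (hp₀mem x).1)
    simp [hGpdef, hempty]
  have hGp1 : ∀ s : ℝ, 1 ≤ s → Gp s = 1 := by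
    intro s hs
    have huniv : {x | p₀ x ≤ s} = univ := by
      ext x
      simp only [mem_setOf_eq, mem_univ, iff_true]
      exact le_trans (le_of_lt (hp₀mem x).2) hs
    simp [hGpdef, huniv]
  -- facts about H'
  have hH'mono : Monotone H' := by
    intro a b hab
    rcases lt_or_ge b 0 with hb | hb
    · have ha : a < 0 := lt_of_le_of_lt hab hb
      simp [hH'def, hGpneg a ha, hGpneg b hb]
    rcases lt_or_ge a 0 with ha | ha
    · have h1 : H' a = 0 := by simp [hH'def, hGpneg a ha]
      have h2 : 0 ≤ H' b := mul_nonneg hb (hGpnonneg b)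
      rw [h1]; exact h2
    · exact mul_le_mul hab (hGpmono hab) (hGpnonneg a) (by linarith)
  have hH'0 : H' 0 = 0 := by simp [hH'def]
  have hH'1 : H' 1 = 1 := by simp [hH'def, hGp1 1 le_rfl]
  have hH'nonneg : ∀ v, 0 ≤ H' v := by
    intro v
    rcases lt_or_ge v 0 with hv | hv
    · simp [hH'def, hGpneg v hv]
    · exact mul_nonneg hv (hGpnonneg v)
  have hH'le1 : ∀ v : ℝ, v ≤ 1 → H' v ≤ 1 := by
    intro v hv
    rcases lt_or_ge v 0 with hv0 | hv0
    · simp [hH'def, hGpneg v hv0]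
    · calc H' v = v * Gp v := rfl
        _ ≤ v * 1 := mul_le_mul_of_nonneg_left (hGple v) hv0
        _ ≤ 1 := by linarith
  have hH'ge1 : ∀ v : ℝ, 1 ≤ v → H' v = v := by
    intro v hv
    simp [hH'def, hGp1 v hv]
  have hH'meas : Measurable H' := measurable_id.mul hGpmono.measurable
  -- range of Fm
  have hFm01 : ∀ q, 0 ≤ Fm q ∧ Fm q ≤ 1 := by
    intro q
    refine ⟨ENNReal.toReal_nonneg, ?_⟩
    exact ENNReal.toReal_le_of_le_ofReal zero_le_one (by simpa using prob_le_one)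
  -- law of Fm
  set mU : Measure ℝ := (μX ⊗ₘ κ).map Fm with hmUdef
  haveI : IsProbabilityMeasure mU := Measure.isProbabilityMeasure_map hFmmeas.aemeasurable
  have stage1' : ∀ s : ℝ, 1 ≤ s → mU (Iic s) = 1 := by
    intro s hs
    rw [hmUdef, Measure.map_apply hFmmeas measurableSet_Iic]
    have huniv : Fm ⁻¹' Iic s = univ :=
      eq_univ_of_forall fun q => mem_Iic.2 (le_trans (hFm01 q).2 hs)
    rw [huniv, measure_univ]
  have stage1 : ∀ s : ℝ, s < 1 → mU (Iic s) = ENNReal.ofReal (H' s) := by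
    intro s hs
    rw [hmUdef, Measure.map_apply hFmmeas measurableSet_Iic,
      Measure.compProd_apply (hFmmeas measurableSet_Iic)]
    have hper : ∀ x, κ x (Prod.mk x ⁻¹' (Fm ⁻¹' Iic s))
        = if p₀ x ≤ s then ENNReal.ofReal s else 0 := by
      intro x
      have hx := hp₀mem x
      have hset : Prod.mk x ⁻¹' (Fm ⁻¹' Iic s) = {y | ((κ x) (Iic y)).toReal ≤ s} := rfl
      rw [hset]
      haveI := hν x
      haveI : NullSingletonClass (ν x) := hνatom x
      exact inner_meas (ν x) (hν0 x) (p₀ x) s hx.1 hx.2 hs (κ x) (hκ x)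
    rw [lintegral_congr hper]
    have hmeasset : MeasurableSet {x | p₀ x ≤ s} := hp₀ measurableSet_Iic
    have hind : (fun x => if p₀ x ≤ s then ENNReal.ofReal s else 0)
        = {x | p₀ x ≤ s}.indicator (fun _ => ENNReal.ofReal s) := by
      funext x
      simp [Set.indicator_apply]
    rw [hind, lintegral_indicator hmeasset, setLIntegral_const]
    rcases le_or_gt 0 s with hs0 | hs0
    · rw [show H' s = s * Gp s from rfl, ENNReal.ofReal_mul hs0, hGpdef,
        ENNReal.ofReal_toReal (measure_ne_top _ _)]
    · have h1 : μX {x | p₀ x ≤ s} = 0 := by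
        have hempty : {x | p₀ x ≤ s} = ∅ := by
          ext x
          simp only [mem_setOf_eq, mem_empty_iff_false, iff_false, not_le]
          exact lt_of_lt_of_le hs0 (le_of_lt (hp₀mem x).1)
        simp [hempty]
      rw [h1, mul_zero, show H' s = s * Gp s from rfl, hGpneg s hs0, mul_zero,
        ENNReal.ofReal_zero]
  -- no atoms for mU
  have hUatom : ∀ u : ℝ, mU {u} = 0 := by
    intro u
    have hIicdecomp : mU (Iic u) = mU (Iio u) + mU {u} := by
      rw [← Iio_union_right, measure_union (by simp) (measurableSet_singleton u)]
    have hIio_eq : mU (Iio u) = mU (Iic u) := by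
      rcases lt_or_ge 1 u with hu1 | hu1
      · have h1 : (1 : ℝ≥0∞) ≤ mU (Iio u) := by
          rw [← stage1' 1 le_rfl]
          exact measure_mono fun z hz => lt_of_le_of_lt hz hu1
        have h2 : mU (Iic u) ≤ 1 := prob_le_one
        exact le_antisymm (measure_mono Iio_subset_Iic_self) (le_trans h2 h1)
      · -- u ≤ 1
        have hseq : Tendsto (fun n : ℕ => mU (Iic (u - 1 / ((n:ℝ) + 1)))) atTop
            (𝓝 (mU (Iio u))) := by
          rw [← aux_iUnion_Iic u]
          exact tendsto_measure_iUnion_atTop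
            (fun n k hnk => Iic_subset_Iic.2 (aux_mono_seq u hnk))
        have hvals : ∀ n : ℕ, mU (Iic (u - 1 / ((n:ℝ) + 1)))
            = ENNReal.ofReal (H' (u - 1 / ((n:ℝ) + 1))) := by
          intro n
          apply stage1
          have h1 : (0:ℝ) < 1 / ((n:ℝ) + 1) := by positivity
          linarith
        have hseq' : Tendsto (fun n : ℕ => ENNReal.ofReal (H' (u - 1 / ((n:ℝ) + 1)))) atTop
            (𝓝 (mU (Iio u))) := hseq.congr fun n => hvals n
        -- limit of the CDF values
        have hseqlim : Tendsto (fun n : ℕ => (u - 1 / ((n:ℝ) + 1))) atTop (𝓝 u) := by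
          have h := tendsto_one_div_add_atTop_nhds_zero_nat (𝕜 := ℝ)
          have h2 : Tendsto (fun n : ℕ => u - 1 / ((n:ℝ) + 1)) atTop (𝓝 (u - 0)) :=
            tendsto_const_nhds.sub h
          simpa using h2
        have hmeaslim : Tendsto (fun n : ℕ => μX {x | p₀ x ≤ u - 1 / ((n:ℝ) + 1)}) atTop
            (𝓝 (μX {x | p₀ x ≤ u})) := by
          have hunion : (⋃ n : ℕ, {x | p₀ x ≤ u - 1 / ((n:ℝ) + 1)}) = {x | p₀ x < u} := by
            ext x
            simp only [mem_iUnion, mem_setOf_eq]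
            constructor
            · rintro ⟨n, hn⟩
              have h1 : (0:ℝ) < 1 / ((n:ℝ) + 1) := by positivity
              linarith
            · intro hx
              obtain ⟨n, hn⟩ := exists_nat_one_div_lt (sub_pos.2 hx)
              exact ⟨n, by linarith⟩
          have hmono : Monotone fun n : ℕ => {x | p₀ x ≤ u - 1 / ((n:ℝ) + 1)} :=
            fun n k hnk x hx => le_trans hx (aux_mono_seq u hnk)
          have h1 := tendsto_measure_iUnion_atTop (μ := μX) hmono
          rw [hunion] at h1
          have h2 : μX {x | p₀ x < u} = μX {x | p₀ x ≤ u} := by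
            have hz : μX {x | p₀ x = u} = 0 := by
              have hpre : {x | p₀ x = u} = p₀ ⁻¹' {u} := rfl
              rw [hpre, ← Measure.map_apply hp₀ (measurableSet_singleton u)]
              haveI : NullSingletonClass (μX.map p₀) := hp₀X
              exact measure_singleton u
            refine le_antisymm (measure_mono ?_) ?_
            · intro x hx
              simp only [mem_setOf_eq] at hx ⊢
              exact le_of_lt hx
            calc μX {x | p₀ x ≤ u} ≤ μX ({x | p₀ x < u} ∪ {x | p₀ x = u}) := by
                  apply measure_mono
                  intro x hx
                  simp only [mem_setOf_eq, mem_union] at hx ⊢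
                  rcases lt_or_eq_of_le hx with h | h
                  · exact Or.inl h
                  · exact Or.inr h
              _ ≤ μX {x | p₀ x < u} + μX {x | p₀ x = u} := measure_union_le _ _
              _ = μX {x | p₀ x < u} := by rw [hz, add_zero]
          rw [h2] at h1
          exact h1
        have htoReal : Tendsto (fun n : ℕ => Gp (u - 1 / ((n:ℝ) + 1))) atTop (𝓝 (Gp u)) :=
          (ENNReal.tendsto_toReal (measure_ne_top _ _)).comp hmeaslim
        have hH'lim : Tendsto (fun n : ℕ => ENNReal.ofReal (H' (u - 1 / ((n:ℝ) + 1)))) atTop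
            (𝓝 (ENNReal.ofReal (H' u))) :=
          (ENNReal.continuous_ofReal.tendsto _).comp (hseqlim.mul htoReal)
        have hIiou : mU (Iio u) = ENNReal.ofReal (H' u) := tendsto_nhds_unique hseq' hH'lim
        have hIicu : mU (Iic u) = ENNReal.ofReal (H' u) := by
          rcases lt_or_eq_of_le hu1 with h | h
          · exact stage1 u h
          · rw [h, stage1' 1 le_rfl, hH'1]
            simp
        rw [hIiou, hIicu]
    rw [hIio_eq] at hIicdecomp
    have hfin : mU (Iic u) ≠ ∞ := measure_ne_top _ _
    nth_rewrite 1 [← add_zero (mU (Iic u))] at hIicdecomp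
    exact ((ENNReal.add_right_inj hfin).1 hIicdecomp).symm
  haveI : NullSingletonClass mU := ⟨hUatom⟩
  -- stage 2: CDF of H' ∘ Fm
  have stage2 : ∀ t : ℝ, 0 ≤ t → t < 1 →
      (μX ⊗ₘ κ) ((fun q => H' (Fm q)) ⁻¹' Iic t) = ENNReal.ofReal t := by
    intro t ht0 ht1
    have hSmeas : MeasurableSet {v : ℝ | H' v ≤ t} := measurableSet_le hH'meas measurable_const
    have hpre : (fun q => H' (Fm q)) ⁻¹' Iic t = Fm ⁻¹' {v | H' v ≤ t} := rfl
    rw [hpre, ← Measure.map_apply hFmmeas hSmeas, ← hmUdef]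
    apply genA mU _ t
    · intro z y hzy hy
      exact le_trans (hH'mono hzy) hy
    · intro y hy
      simp only [mem_setOf_eq] at hy
      rcases lt_or_ge y 1 with hy1 | hy1
      · rw [stage1 y hy1]
        exact ENNReal.ofReal_le_ofReal hy
      · exfalso
        rw [hH'ge1 y hy1] at hy
        linarith
    · intro y hy
      simp only [mem_setOf_eq, not_le] at hy
      rcases lt_or_ge y 1 with hy1 | hy1
      · rw [stage1 y hy1]
        exact ENNReal.ofReal_le_ofReal (le_of_lt hy)
      · rw [stage1' y hy1]
        exact le_of_lt (ENNReal.ofReal_lt_one.2 ht1)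
    · refine ⟨0, ?_⟩
      simp only [mem_setOf_eq, hH'0]
      exact ht0
    · refine ⟨1, ?_⟩
      simp only [mem_setOf_eq, hH'1, not_le]
      exact ht1
  -- the pushforward is uniform on [0,1]
  have hφ0 : Measurable fun q : (Fin d → ℝ) × ℝ => H' (Fm q) := hH'meas.comp hFmmeas
  have hmapeq : (μX ⊗ₘ κ).map (fun q => H' (Fm q)) = volume.restrict (Icc (0:ℝ) 1) := by
    refine MeasureTheory.Measure.ext_of_Iic _ _ (fun t => ?_)
    rw [Measure.map_apply hφ0 measurableSet_Iic,
      Measure.restrict_apply measurableSet_Iic]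
    rcases lt_or_ge t 0 with ht | ht
    · have h1 : (fun q => H' (Fm q)) ⁻¹' Iic t = ∅ := by
        refine eq_empty_iff_forall_notMem.2 fun q hq => ?_
        simp only [mem_preimage, mem_Iic] at hq
        have := hH'nonneg (Fm q)
        linarith
      have h2 : Iic t ∩ Icc (0:ℝ) 1 = ∅ := by
        refine eq_empty_iff_forall_notMem.2 fun z hz => ?_
        simp only [mem_inter_iff, mem_Iic, mem_Icc] at hz
        linarith [hz.1, hz.2.1]
      rw [h1, h2]
      simp
    rcases lt_or_ge t 1 with ht1 | ht1
    · rw [stage2 t ht ht1]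
      have h2 : Iic t ∩ Icc (0:ℝ) 1 = Icc 0 t := by
        ext z
        simp only [mem_inter_iff, mem_Iic, mem_Icc]
        constructor
        · rintro ⟨h1, h2, h3⟩
          exact ⟨h2, h1⟩
        · rintro ⟨h1, h2⟩
          exact ⟨h2, h1, by linarith⟩
      rw [h2, Real.volume_Icc]
      simp
    · have h1 : (fun q => H' (Fm q)) ⁻¹' Iic t = univ := by
        refine eq_univ_of_forall fun q => ?_
        simp only [mem_preimage, mem_Iic]
        exact le_trans (hH'le1 (Fm q) (hFm01 q).2) ht1
      have h2 : Iic t ∩ Icc (0:ℝ) 1 = Icc 0 1 := by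
        ext z
        simp only [mem_inter_iff, mem_Iic, mem_Icc]
        constructor
        · rintro ⟨h1, h2, h3⟩
          exact ⟨h2, h3⟩
        · rintro ⟨h1, h2⟩
          exact ⟨by linarith, h1, h2⟩
      rw [h1, h2, measure_univ, Real.volume_Icc]
      simp
  -- integral identity
  have hφ : Measurable fun q : (Fin d → ℝ) × ℝ => H' (Fm q) := hH'meas.comp hFmmeas
  have hint : ∫ q, f (H' (Fm q)) ∂(μX ⊗ₘ κ) = ∫ u in (0:ℝ)..1, f u := by
    calc ∫ q, f (H' (Fm q)) ∂(μX ⊗ₘ κ)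
        = ∫ v, f v ∂((μX ⊗ₘ κ).map (fun q => H' (Fm q))) :=
          (integral_map hφ.aemeasurable f.continuous.measurable.aestronglyMeasurable).symm
      _ = ∫ v, f v ∂(volume.restrict (Icc (0:ℝ) 1)) := by rw [hmapeq]
      _ = ∫ v in Ioc (0:ℝ) 1, f v := integral_Icc_eq_integral_Ioc
      _ = ∫ u in (0:ℝ)..1, f u := (intervalIntegral.integral_of_le zero_le_one).symm
  -- SLLN
  set g : (Fin d → ℝ) × ℝ → ℝ := fun q => f (H' (Fm q)) with hgdef
  have hgmeas : Measurable g := f.continuous.measurable.comp (hH'meas.comp hFmmeas)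
  set Z : ℕ → Ω → ℝ := fun i ω => g (XY i ω) with hZdef
  have hZmeas : ∀ i, Measurable (Z i) := fun i => hgmeas.comp (hXYmeas i)
  have hcomp : ∀ i, g ∘ XY i = Z i := fun i => rfl
  have hint0 : Integrable (Z 0) P := by
    refine Integrable.mono' (integrable_const ‖f‖) (hZmeas 0).aestronglyMeasurable ?_
    exact Filter.Eventually.of_forall fun ω => f.norm_coe_le_norm _
  have hpair : Pairwise (Function.onFun (IndepFun · · P) Z) := fun i j hij =>
    (hindep.indepFun hij).comp hgmeas hgmeas
  have hid : ∀ i, IdentDistrib (Z i) (Z 0) P P := by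
    intro i
    refine ⟨(hZmeas i).aemeasurable, (hZmeas 0).aemeasurable, ?_⟩
    calc P.map (Z i) = P.map (g ∘ XY i) := by rw [hcomp]
      _ = (P.map (XY i)).map g := (Measure.map_map hgmeas (hXYmeas i)).symm
      _ = (P.map (XY 0)).map g := by rw [hident i, hident 0]
      _ = P.map (g ∘ XY 0) := Measure.map_map hgmeas (hXYmeas 0)
      _ = P.map (Z 0) := by rw [hcomp]
  have hslln := strong_law_ae_real Z hint0 hpair hid
  have hmean : P[Z 0] = ∫ u in (0:ℝ)..1, f u := by
    calc P[Z 0] = ∫ q, g q ∂(P.map (XY 0)) :=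
          (integral_map (hXYmeas 0).aemeasurable hgmeas.aestronglyMeasurable).symm
      _ = ∫ q, g q ∂(μX ⊗ₘ κ) := by rw [hident 0]
      _ = ∫ u in (0:ℝ)..1, f u := hint
  rw [hmean] at hslln
  filter_upwards [hslln] with ω hω
  have hptwise : ∀ i : ℕ, f (H (F ((XY i ω).2) ((XY i ω).1))) = Z i ω := by
    intro i
    have hFval : F ((XY i ω).2) ((XY i ω).1) = Fm (XY i ω) := hF _ _
    rw [hFval]
    have hHF : H (Fm (XY i ω)) = H' (Fm (XY i ω)) :=
      hH _ ⟨(hFm01 _).1, (hFm01 _).2⟩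
    rw [hHF]
  have hfun : (fun n : ℕ => (1 / (n:ℝ)) * ∑ i ∈ Finset.range n,
        f (H (F ((XY i ω).2) ((XY i ω).1))))
      = fun n : ℕ => (∑ i ∈ Finset.range n, Z i ω) / (n:ℝ) := by
    funext n
    rw [Finset.sum_congr rfl fun i _ => hptwise i]
    ring
  rw [hfun]
  exact hω
end
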